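/- arXiv:1804.10079 — 2 statements merged into one kernel-verified Lean document; each statement's English description precedes it below -/
import Mathlib

section
/- Given N ≥ 2 i.i.d. pairs (Q̂⁽ⁱ⁾, Ĵ⁽ⁱ⁾), i ∈ {1,…,N}, of random elements of ℝ^m × ℝ^{m×n} with E[Q̂⁽ⁱ⁾] = Q, E[Ĵ⁽ⁱ⁾] = J, and finite second moments of the products, the covariance matrix of the gradient estimator (1/(N(N−1))) Σ_{1 ≤ i ≠ j ≤ N} (Ĵ⁽ⁱ⁾)ᵀ Q̂⁽ʲ⁾ equals Σ_A²/N + Σ_B²/(N(N−1)), where Σ_A² and Σ_B² are positive semidefinite matrices not depending on N; explicitly, Σ_A² = Var[Jᵀ Q̂ + Ĵᵀ Q] and Σ_B² = (1/2) Var[(Ĵ − J)ᵀ(Q̂′ − Q) + (Ĵ′ − J)ᵀ(Q̂ − Q)], where (Q̂, Ĵ) and (Q̂′, Ĵ′) are two independent copies of the pair. -/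
open MeasureTheory Matrix

instance {m n : ℕ} : MeasurableSpace (Matrix (Fin m) (Fin n) ℝ) :=
  (inferInstance : MeasurableSpace (Fin m → Fin n → ℝ))

/-- Covariance matrix `Var[X] = E[X Xᵀ] − E[X] E[X]ᵀ` of a random vector. -/
noncomputable def vecVar {Ω : Type*} [MeasurableSpace Ω] (μ : Measure Ω) {n : ℕ}
    (X : Ω → Fin n → ℝ) : Matrix (Fin n) (Fin n) ℝ :=
  Matrix.of fun i j => (∫ ω, X ω i * X ω j ∂μ) - (∫ ω, X ω i ∂μ) * (∫ ω, X ω j ∂μ)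

namespace Stmt1Aux

variable {Ω : Type*} [MeasurableSpace Ω] {μ : Measure Ω}

noncomputable def cov (μ : Measure Ω) (f g : Ω → ℝ) : ℝ :=
  (∫ ω, f ω * g ω ∂μ) - (∫ ω, f ω ∂μ) * (∫ ω, g ω ∂μ)

theorem integrable_mul₂ [IsFiniteMeasure μ] {f g : Ω → ℝ} (hf : MemLp f 2 μ)
    (hg : MemLp g 2 μ) : Integrable (fun ω => f ω * g ω) μ := by
  have hb : Integrable (fun ω => (f ω ^ 2 + g ω ^ 2) / 2) μ :=
    (hf.integrable_sq.add hg.integrable_sq).div_const 2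
  refine Integrable.mono' hb (hf.aestronglyMeasurable.mul hg.aestronglyMeasurable) ?_
  refine ae_of_all _ fun ω => ?_
  rw [Real.norm_eq_abs, abs_mul]
  nlinarith [sq_nonneg (|f ω| - |g ω|), sq_abs (f ω), sq_abs (g ω), abs_nonneg (f ω),
    abs_nonneg (g ω)]

theorem memLp2_int [IsFiniteMeasure μ] {f : Ω → ℝ} (hf : MemLp f 2 μ) : Integrable f μ :=
  hf.integrable one_le_two

theorem cov_comm (f g : Ω → ℝ) : cov μ f g = cov μ g f := by
  unfold cov
  rw [show (fun ω => f ω * g ω) = fun ω => g ω * f ω from funext fun ω => mul_comm _ _]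
  ring

theorem cov_sum_left [IsFiniteMeasure μ] {ι : Type*} (s : Finset ι) (f : ι → Ω → ℝ)
    (g : Ω → ℝ) (hf : ∀ i ∈ s, MemLp (f i) 2 μ) (hg : MemLp g 2 μ) :
    cov μ (fun ω => ∑ i ∈ s, f i ω) g = ∑ i ∈ s, cov μ (f i) g := by
  unfold cov
  rw [show (fun ω => (∑ i ∈ s, f i ω) * g ω) = fun ω => ∑ i ∈ s, f i ω * g ω from
      funext fun ω => by rw [Finset.sum_mul],
    integral_finset_sum s (fun i hi => integrable_mul₂ (hf i hi) hg),
    integral_finset_sum s (fun i hi => memLp2_int (hf i hi)),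
    Finset.sum_mul, ← Finset.sum_sub_distrib]

theorem cov_sum_right [IsFiniteMeasure μ] {ι : Type*} (s : Finset ι) (f : Ω → ℝ)
    (g : ι → Ω → ℝ) (hf : MemLp f 2 μ) (hg : ∀ i ∈ s, MemLp (g i) 2 μ) :
    cov μ f (fun ω => ∑ i ∈ s, g i ω) = ∑ i ∈ s, cov μ f (g i) := by
  rw [cov_comm, cov_sum_left s g f hg hf]
  exact Finset.sum_congr rfl fun i _ => cov_comm _ _

theorem cov_sum_sum [IsFiniteMeasure μ] {ι κ : Type*} (s : Finset ι) (t : Finset κ)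
    (f : ι → Ω → ℝ) (g : κ → Ω → ℝ) (hf : ∀ i ∈ s, MemLp (f i) 2 μ)
    (hg : ∀ j ∈ t, MemLp (g j) 2 μ) :
    cov μ (fun ω => ∑ i ∈ s, f i ω) (fun ω => ∑ j ∈ t, g j ω) =
      ∑ i ∈ s, ∑ j ∈ t, cov μ (f i) (g j) := by
  have hsum : MemLp (fun ω => ∑ j ∈ t, g j ω) 2 μ := memLp_finset_sum t hg
  rw [cov_sum_left s f _ hf hsum]
  exact Finset.sum_congr rfl fun i hi => cov_sum_right t (f i) g (hf i hi) hg

theorem cov_const_mul (a : ℝ) (f g : Ω → ℝ) :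
    cov μ (fun ω => a * f ω) g = a * cov μ f g := by
  unfold cov
  rw [show (fun ω => (a * f ω) * g ω) = fun ω => a * (f ω * g ω) from funext fun ω => by ring,
    integral_const_mul, integral_const_mul]
  ring

theorem cov_mul_const (a : ℝ) (f g : Ω → ℝ) :
    cov μ f (fun ω => a * g ω) = a * cov μ f g := by
  rw [cov_comm, cov_const_mul, cov_comm]

theorem cov_zero_right (f : Ω → ℝ) : cov μ f (fun _ => (0 : ℝ)) = 0 := by
  simp [cov]

theorem cov_zero_left (g : Ω → ℝ) : cov μ (fun _ => (0 : ℝ)) g = 0 := by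
  simp [cov]

theorem cov_add_const [IsProbabilityMeasure μ] {f g : Ω → ℝ} (hf : MemLp f 2 μ)
    (hg : MemLp g 2 μ) (cf cg : ℝ) :
    cov μ (fun ω => f ω + cf) (fun ω => g ω + cg) = cov μ f g := by
  unfold cov
  rw [show (fun ω => (f ω + cf) * (g ω + cg)) =
      fun ω => (f ω * g ω + cf * g ω) + (cg * f ω + cf * cg) from funext fun ω => by ring]
  have h1 : Integrable (fun ω => f ω * g ω + cf * g ω) μ :=
    (integrable_mul₂ hf hg).add ((memLp2_int hg).const_mul cf)
  have h2 : Integrable (fun ω => cg * f ω + cf * cg) μ :=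
    ((memLp2_int hf).const_mul cg).add (integrable_const _)
  rw [integral_add h1 h2,
    integral_add (integrable_mul₂ hf hg) ((memLp2_int hg).const_mul cf),
    integral_add ((memLp2_int hf).const_mul cg) (integrable_const _),
    integral_add (memLp2_int hf) (integrable_const _),
    integral_add (memLp2_int hg) (integrable_const _)]
  simp only [integral_const_mul, integral_const, measure_univ, probReal_univ, ENNReal.toReal_one, one_smul,
    smul_eq_mul]
  ring

theorem cov_add_add [IsProbabilityMeasure μ] {f₁ f₂ g₁ g₂ : Ω → ℝ} (hf₁ : MemLp f₁ 2 μ)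
    (hf₂ : MemLp f₂ 2 μ) (hg₁ : MemLp g₁ 2 μ) (hg₂ : MemLp g₂ 2 μ) :
    cov μ (fun ω => f₁ ω + f₂ ω) (fun ω => g₁ ω + g₂ ω) =
      cov μ f₁ g₁ + cov μ f₁ g₂ + cov μ f₂ g₁ + cov μ f₂ g₂ := by
  have e1 : (fun ω => f₁ ω + f₂ ω) = fun ω => ∑ b : Fin 2, (if b = 0 then f₁ else f₂) ω := by
    funext ω; simp [Fin.sum_univ_two]
  have e2 : (fun ω => g₁ ω + g₂ ω) = fun ω => ∑ b : Fin 2, (if b = 0 then g₁ else g₂) ω := by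
    funext ω; simp [Fin.sum_univ_two]
  rw [e1, e2, cov_sum_sum _ _ _ _ (fun b _ => by by_cases h : b = 0 <;> simp [h, hf₁, hf₂])
    (fun b _ => by by_cases h : b = 0 <;> simp [h, hg₁, hg₂])]
  simp [Fin.sum_univ_two]
  ring

theorem cov_indep {f g : Ω → ℝ} (h : ProbabilityTheory.IndepFun f g μ)
    (hf : AEStronglyMeasurable f μ) (hg : AEStronglyMeasurable g μ) : cov μ f g = 0 := by
  unfold cov
  rw [h.integral_fun_mul_eq_mul_integral hf hg]
  ring

theorem cov_identDistrib {Ω' : Type*} [MeasurableSpace Ω'] {ν : Measure Ω'}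
    {f g : Ω → ℝ} {f' g' : Ω' → ℝ}
    (h : ProbabilityTheory.IdentDistrib (fun ω => (f ω, g ω)) (fun ω => (f' ω, g' ω)) μ ν) :
    cov μ f g = cov ν f' g' := by
  unfold cov
  have h1 : (∫ ω, f ω * g ω ∂μ) = ∫ ω, f' ω * g' ω ∂ν :=
    (h.comp (measurable_fst.mul measurable_snd)).integral_eq
  have h2 : (∫ ω, f ω ∂μ) = ∫ ω, f' ω ∂ν := (h.comp measurable_fst).integral_eq
  have h3 : (∫ ω, g ω ∂μ) = ∫ ω, g' ω ∂ν := (h.comp measurable_snd).integral_eq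
  rw [h1, h2, h3]

theorem cov_self_nonneg [IsProbabilityMeasure μ] {f : Ω → ℝ} (hf : MemLp f 2 μ) :
    0 ≤ cov μ f f := by
  set c := ∫ ω, f ω ∂μ with hc
  have h2 : (∫ ω, (f ω - c) ^ 2 ∂μ) = cov μ f f := by
    rw [show (fun ω => (f ω - c) ^ 2) = fun ω => f ω * f ω - (2 * c) * f ω + c * c from
        funext fun ω => by ring]
    have h1 : Integrable (fun ω => f ω * f ω - 2 * c * f ω) μ :=
      (integrable_mul₂ hf hf).sub ((memLp2_int hf).const_mul (2 * c))
    rw [integral_add h1 (integrable_const _),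
      integral_sub (integrable_mul₂ hf hf) ((memLp2_int hf).const_mul (2 * c)),
      integral_const_mul]
    simp only [integral_const, measure_univ, probReal_univ, ENNReal.toReal_one, one_smul, smul_eq_mul, cov, ← hc]
    ring
  rw [← h2]
  exact integral_nonneg fun ω => sq_nonneg _

theorem vecVar_apply {k : ℕ} (X : Ω → Fin k → ℝ) (p q : Fin k) :
    vecVar μ X p q = cov μ (fun ω => X ω p) (fun ω => X ω q) := rfl

theorem vecVar_posSemidef [IsProbabilityMeasure μ] {k : ℕ} (X : Ω → Fin k → ℝ)
    (hX : ∀ i, MemLp (fun ω => X ω i) 2 μ) : (vecVar μ X).PosSemidef := by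
  rw [Matrix.posSemidef_iff_dotProduct_mulVec]
  constructor
  · ext p q
    simp only [Matrix.conjTranspose_apply, star_trivial]
    exact cov_comm (μ := μ) (fun ω => X ω q) (fun ω => X ω p)
  · intro x
    have hx2 : ∀ i : Fin k, MemLp (fun ω => x i * X ω i) 2 μ :=
      fun i => (hX i).const_mul (x i)
    have hY : MemLp (fun ω => ∑ i, x i * X ω i) 2 μ :=
      memLp_finset_sum _ fun i _ => hx2 i
    have h1 : dotProduct (star x) ((vecVar μ X) *ᵥ x) =
        cov μ (fun ω => ∑ i, x i * X ω i) (fun ω => ∑ i, x i * X ω i) := by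
      rw [cov_sum_sum _ _ _ _ (fun i _ => hx2 i) (fun i _ => hx2 i)]
      simp only [cov_const_mul, cov_mul_const, dotProduct, Matrix.mulVec, star_trivial,
        Finset.mul_sum]
      exact Finset.sum_congr rfl fun p _ => Finset.sum_congr rfl fun q _ => by
        rw [vecVar_apply]; ring
    rw [h1]
    exact cov_self_nonneg hY

theorem posSemidef_smul {k : ℕ} {M : Matrix (Fin k) (Fin k) ℝ} (h : M.PosSemidef) {c : ℝ}
    (hc : 0 ≤ c) : (c • M).PosSemidef := by
  rw [Matrix.posSemidef_iff_dotProduct_mulVec]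
  refine ⟨?_, fun x => ?_⟩
  · rw [Matrix.IsHermitian, Matrix.conjTranspose_smul, h.1]
    simp
  · rw [Matrix.smul_mulVec, dotProduct_smul]
    exact mul_nonneg hc (h.dotProduct_mulVec_nonneg x)

section Psi

variable {m n : ℕ}

noncomputable def psiA (J : Matrix (Fin m) (Fin n) ℝ) (Q : Fin m → ℝ) (p : Fin n)
    (v : (Fin m → ℝ) × Matrix (Fin m) (Fin n) ℝ) : ℝ :=
  (∑ r, J r p * v.1 r) + ∑ r, v.2 r p * Q r

noncomputable def psiB (J : Matrix (Fin m) (Fin n) ℝ) (Q : Fin m → ℝ) (p : Fin n)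
    (w : ((Fin m → ℝ) × Matrix (Fin m) (Fin n) ℝ) ×
      ((Fin m → ℝ) × Matrix (Fin m) (Fin n) ℝ)) : ℝ :=
  ∑ r, (w.1.2 r p - J r p) * (w.2.1 r - Q r)

theorem measurable_c1 (r : Fin m) :
    Measurable fun v : (Fin m → ℝ) × Matrix (Fin m) (Fin n) ℝ => v.1 r :=
  (measurable_pi_apply r).comp measurable_fst

theorem measurable_c2 (r : Fin m) (p : Fin n) :
    Measurable fun v : (Fin m → ℝ) × Matrix (Fin m) (Fin n) ℝ => v.2 r p := by
  have h1 : Measurable fun v : (Fin m → ℝ) × Matrix (Fin m) (Fin n) ℝ => v.2 r :=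
    (measurable_pi_apply r).comp measurable_snd
  exact (measurable_pi_apply p).comp h1

theorem measurable_psiA (J : Matrix (Fin m) (Fin n) ℝ) (Q : Fin m → ℝ) (p : Fin n) :
    Measurable (psiA J Q p) := by
  unfold psiA
  exact (Finset.measurable_sum _ fun r _ => (measurable_c1 r).const_mul (J r p)).add
    (Finset.measurable_sum _ fun r _ => (measurable_c2 r p).mul_const (Q r))

theorem measurable_psiB (J : Matrix (Fin m) (Fin n) ℝ) (Q : Fin m → ℝ) (p : Fin n) :
    Measurable (psiB J Q p) := by
  unfold psiB
  exact Finset.measurable_sum _ fun r _ =>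
    (((measurable_c2 r p).comp measurable_fst).sub measurable_const).mul
      (((measurable_c1 r).comp measurable_snd).sub measurable_const)

theorem sum_ite_ne_fun {α : Type*} [Fintype α] [DecidableEq α] (x : α → ℝ) (i : α) :
    (∑ j, if i ≠ j then x j else 0) = (∑ j, x j) - x i := by
  have : ∀ j : α, (if i ≠ j then x j else 0) = x j - (if i = j then x j else 0) := by
    intro j; by_cases h : i = j <;> simp [h]
  rw [Finset.sum_congr rfl fun j _ => this j, Finset.sum_sub_distrib, Finset.sum_ite_eq]
  simp

end Psi

end Stmt1Aux

open Stmt1Aux ProbabilityTheory in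
/-- Lemma B.2: given `N ≥ 2` i.i.d. pairs `(Q̂⁽ⁱ⁾, Ĵ⁽ⁱ⁾)` of unbiased
estimators of `Q` and `J`, the covariance matrix of the gradient estimator
`(1/(N(N−1))) Σ_{i ≠ j} (Ĵ⁽ⁱ⁾)ᵀ Q̂⁽ʲ⁾` equals `Σ_A²/N + Σ_B²/(N(N−1))`, where
`Σ_A² = Var[Jᵀ Q̂ + Ĵᵀ Q]` and `Σ_B² = (1/2)·Var[(Ĵ−J)ᵀ(Q̂′−Q) + (Ĵ′−J)ᵀ(Q̂−Q)]`
(computed from two of the independent copies, hence not depending on `N`) are positive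
semidefinite matrices. -/
theorem stmt1 {Ω : Type*} [MeasurableSpace Ω] (μ : Measure Ω) [IsProbabilityMeasure μ]
    {m n : ℕ} {N : ℕ} (hN : 2 ≤ N)
    (Qh : Fin N → Ω → Fin m → ℝ) (Jh : Fin N → Ω → Matrix (Fin m) (Fin n) ℝ)
    (Q : Fin m → ℝ) (J : Matrix (Fin m) (Fin n) ℝ)
    (hmeas : ∀ i, Measurable fun ω => (Qh i ω, Jh i ω))
    (hindep : ProbabilityTheory.iIndepFun
      (fun i ω => (Qh i ω, Jh i ω)) μ)
    (hid : ∀ i j, ProbabilityTheory.IdentDistrib (fun ω => (Qh i ω, Jh i ω))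
      (fun ω => (Qh j ω, Jh j ω)) μ μ)
    (hQunb : ∀ a i, ∫ ω, Qh a ω i ∂μ = Q i)
    (hJunb : ∀ a i j, ∫ ω, Jh a ω i j ∂μ = J i j)
    -- finite second moments of the products
    (hQ2 : ∀ a i, MemLp (fun ω => Qh a ω i) 2 μ)
    (hJ2 : ∀ a i j, MemLp (fun ω => Jh a ω i j) 2 μ)
    (hprod2 : ∀ a b, ∀ i : Fin n,
      MemLp (fun ω => ((Jh a ω)ᵀ.mulVec (Qh b ω)) i) 2 μ) :
    vecVar μ (fun ω => (1 / ((N : ℝ) * ((N : ℝ) - 1))) •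
        ∑ i : Fin N, ∑ j : Fin N,
          if i ≠ j then (Jh i ω)ᵀ.mulVec (Qh j ω) else 0) =
      (1 / (N : ℝ)) • vecVar μ (fun ω =>
          Jᵀ.mulVec (Qh ⟨0, by omega⟩ ω) + (Jh ⟨0, by omega⟩ ω)ᵀ.mulVec Q) +
        (1 / ((N : ℝ) * ((N : ℝ) - 1))) • ((1 / 2 : ℝ) • vecVar μ (fun ω =>
          (Jh ⟨0, by omega⟩ ω - J)ᵀ.mulVec (Qh ⟨1, by omega⟩ ω - Q) +
            (Jh ⟨1, by omega⟩ ω - J)ᵀ.mulVec (Qh ⟨0, by omega⟩ ω - Q))) ∧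
    (vecVar μ (fun ω =>
        Jᵀ.mulVec (Qh ⟨0, by omega⟩ ω) + (Jh ⟨0, by omega⟩ ω)ᵀ.mulVec Q)).PosSemidef ∧
    ((1 / 2 : ℝ) • vecVar μ (fun ω =>
        (Jh ⟨0, by omega⟩ ω - J)ᵀ.mulVec (Qh ⟨1, by omega⟩ ω - Q) +
          (Jh ⟨1, by omega⟩ ω - J)ᵀ.mulVec (Qh ⟨0, by omega⟩ ω - Q))).PosSemidef := by
  classical
  have hNR : (2:ℝ) ≤ (N:ℝ) := by exact_mod_cast hN
  have hN0 : ((N : ℝ)) ≠ 0 := by linarith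
  have hN1 : ((N : ℝ) - 1) ≠ 0 := by linarith
  set i0 : Fin N := ⟨0, by omega⟩ with hi0def
  set i1 : Fin N := ⟨1, by omega⟩ with hi1def
  have h01 : i0 ≠ i1 := by simp [hi0def, hi1def, Fin.ext_iff]
  have h10 : i1 ≠ i0 := h01.symm
  set c : ℝ := 1 / ((N : ℝ) * ((N : ℝ) - 1)) with hcdef
  set PA : Fin N → Fin n → Ω → ℝ := fun i p ω => psiA J Q p (Qh i ω, Jh i ω) with hPA
  set PB : Fin N → Fin N → Fin n → Ω → ℝ :=
    fun i j p ω => psiB J Q p ((Qh i ω, Jh i ω), (Qh j ω, Jh j ω)) with hPB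
  -- ℒ² facts
  have hJQ2 : ∀ a r p, MemLp (fun ω => Jh a ω r p * Q r) 2 μ := by
    intro a r p
    have := (hJ2 a r p).const_mul (Q r)
    simpa [mul_comm] using this
  have hQc2 : ∀ a r, MemLp (fun ω => Qh a ω r - Q r) 2 μ :=
    fun a r => (hQ2 a r).sub (memLp_const _)
  have hJc2 : ∀ a r p, MemLp (fun ω => Jh a ω r p - J r p) 2 μ :=
    fun a r p => (hJ2 a r p).sub (memLp_const _)
  have hA2 : ∀ i p, MemLp (PA i p) 2 μ := by
    intro i p
    simp only [hPA, psiA]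
    exact (memLp_finset_sum _ fun r _ => (hQ2 i r).const_mul (J r p)).add
      (memLp_finset_sum _ fun r _ => hJQ2 i r p)
  have hB2 : ∀ i j p, MemLp (PB i j p) 2 μ := by
    intro i j p
    simp only [hPB, psiB]
    have heq : (fun ω => ∑ r, (Jh i ω r p - J r p) * (Qh j ω r - Q r)) =
        fun ω => (((Jh i ω)ᵀ.mulVec (Qh j ω)) p - (∑ r, Jh i ω r p * Q r) -
          ∑ r, J r p * Qh j ω r) + ∑ r, J r p * Q r := by
      funext ω
      simp only [Matrix.mulVec, dotProduct, Matrix.transpose_apply, sub_mul, mul_sub,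
        Finset.sum_sub_distrib]
      ring
    rw [heq]
    exact (((hprod2 i j p).sub (memLp_finset_sum _ fun r _ => hJQ2 i r p)).sub
      (memLp_finset_sum _ fun r _ => (hQ2 j r).const_mul (J r p))).add (memLp_const _)
  -- mean-zero facts
  have hQc0 : ∀ a r, (∫ ω, (Qh a ω r - Q r) ∂μ) = 0 := by
    intro a r
    rw [integral_sub (memLp2_int (hQ2 a r)) (integrable_const _), hQunb a r, integral_const]
    simp
  have hJc0 : ∀ a r p, (∫ ω, (Jh a ω r p - J r p) ∂μ) = 0 := by
    intro a r p
    rw [integral_sub (memLp2_int (hJ2 a r p)) (integrable_const _), hJunb a r p, integral_const]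
    simp
  -- independence helpers
  have hint2 : ∀ (a b : Fin N) (f g : (Fin m → ℝ) × Matrix (Fin m) (Fin n) ℝ → ℝ), a ≠ b →
      Measurable f → Measurable g →
      (∫ ω, f (Qh a ω, Jh a ω) * g (Qh b ω, Jh b ω) ∂μ) =
        (∫ ω, f (Qh a ω, Jh a ω) ∂μ) * ∫ ω, g (Qh b ω, Jh b ω) ∂μ := by
    intro a b f g hab hf hg
    exact ProbabilityTheory.IndepFun.integral_fun_mul_eq_mul_integral ((hindep.indepFun hab).comp hf hg)
      ((hf.comp (hmeas a)).aestronglyMeasurable) ((hg.comp (hmeas b)).aestronglyMeasurable)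
  have hint3 : ∀ (a b d : Fin N) (f g h : (Fin m → ℝ) × Matrix (Fin m) (Fin n) ℝ → ℝ),
      a ≠ b → a ≠ d → b ≠ d → Measurable f → Measurable g → Measurable h →
      Integrable (fun ω => f (Qh a ω, Jh a ω)) μ →
      Integrable (fun ω => g (Qh b ω, Jh b ω)) μ →
      Integrable (fun ω => h (Qh d ω, Jh d ω)) μ →
      Integrable (fun ω => f (Qh a ω, Jh a ω) * g (Qh b ω, Jh b ω) * h (Qh d ω, Jh d ω)) μ ∧
      (∫ ω, f (Qh a ω, Jh a ω) * g (Qh b ω, Jh b ω) * h (Qh d ω, Jh d ω) ∂μ) =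
        (∫ ω, f (Qh a ω, Jh a ω) ∂μ) * (∫ ω, g (Qh b ω, Jh b ω) ∂μ) *
          ∫ ω, h (Qh d ω, Jh d ω) ∂μ := by
    intro a b d f g h hab had hbd hf hg hh hfa hgb hhd
    have hfg : IndepFun (fun ω => f (Qh a ω, Jh a ω)) (fun ω => g (Qh b ω, Jh b ω)) μ :=
      (hindep.indepFun hab).comp hf hg
    have hfgi : Integrable (fun ω => f (Qh a ω, Jh a ω) * g (Qh b ω, Jh b ω)) μ :=
      hfg.integrable_mul hfa hgb
    have hpair : IndepFun (fun ω => ((Qh a ω, Jh a ω), (Qh b ω, Jh b ω)))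
        (fun ω => (Qh d ω, Jh d ω)) μ := hindep.indepFun_prodMk hmeas a b d had hbd
    have hcomp : IndepFun (fun ω => f (Qh a ω, Jh a ω) * g (Qh b ω, Jh b ω))
        (fun ω => h (Qh d ω, Jh d ω)) μ :=
      hpair.comp ((hf.comp measurable_fst).mul (hg.comp measurable_snd)) hh
    refine ⟨hcomp.integrable_mul hfgi hhd, ?_⟩
    have e1 : (∫ ω, f (Qh a ω, Jh a ω) * g (Qh b ω, Jh b ω) * h (Qh d ω, Jh d ω) ∂μ) =
        (∫ ω, f (Qh a ω, Jh a ω) * g (Qh b ω, Jh b ω) ∂μ) * ∫ ω, h (Qh d ω, Jh d ω) ∂μ :=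
      hcomp.integral_fun_mul_eq_mul_integral hfgi.aestronglyMeasurable ((hh.comp (hmeas d)).aestronglyMeasurable)
    rw [e1, hfg.integral_fun_mul_eq_mul_integral ((hf.comp (hmeas a)).aestronglyMeasurable)
      ((hg.comp (hmeas b)).aestronglyMeasurable)]
  have hint1p : ∀ (a k l : Fin N) (f : (Fin m → ℝ) × Matrix (Fin m) (Fin n) ℝ → ℝ)
      (g : ((Fin m → ℝ) × Matrix (Fin m) (Fin n) ℝ) ×
        ((Fin m → ℝ) × Matrix (Fin m) (Fin n) ℝ) → ℝ), k ≠ a → l ≠ a →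
      Measurable f → Measurable g →
      (∫ ω, f (Qh a ω, Jh a ω) * g ((Qh k ω, Jh k ω), (Qh l ω, Jh l ω)) ∂μ) =
        (∫ ω, f (Qh a ω, Jh a ω) ∂μ) *
          ∫ ω, g ((Qh k ω, Jh k ω), (Qh l ω, Jh l ω)) ∂μ := by
    intro a k l f g hka hla hf hg
    have hpair := (hindep.indepFun_prodMk hmeas k l a hka hla).symm
    exact (hpair.comp hf hg).integral_fun_mul_eq_mul_integral ((hf.comp (hmeas a)).aestronglyMeasurable)
      ((hg.comp ((hmeas k).prodMk (hmeas l))).aestronglyMeasurable)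
  have hint22 : ∀ (a b k l : Fin N)
      (f g : ((Fin m → ℝ) × Matrix (Fin m) (Fin n) ℝ) ×
        ((Fin m → ℝ) × Matrix (Fin m) (Fin n) ℝ) → ℝ),
      a ≠ k → a ≠ l → b ≠ k → b ≠ l → Measurable f → Measurable g →
      (∫ ω, f ((Qh a ω, Jh a ω), (Qh b ω, Jh b ω)) *
          g ((Qh k ω, Jh k ω), (Qh l ω, Jh l ω)) ∂μ) =
        (∫ ω, f ((Qh a ω, Jh a ω), (Qh b ω, Jh b ω)) ∂μ) *
          ∫ ω, g ((Qh k ω, Jh k ω), (Qh l ω, Jh l ω)) ∂μ := by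
    intro a b k l f g hak hal hbk hbl hf hg
    exact ((hindep.indepFun_prodMk_prodMk hmeas a b k l hak hal hbk hbl).comp hf hg).integral_fun_mul_eq_mul_integral
      ((hf.comp ((hmeas a).prodMk (hmeas b))).aestronglyMeasurable)
      ((hg.comp ((hmeas k).prodMk (hmeas l))).aestronglyMeasurable)
  have hPAeq : ∀ i p, PA i p = fun ω => (∑ r, J r p * Qh i ω r) + ∑ r, Jh i ω r p * Q r :=
    fun i p => rfl
  have hPBeq : ∀ i j p, PB i j p = fun ω => ∑ r, (Jh i ω r p - J r p) * (Qh j ω r - Q r) :=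
    fun i j p => rfl
  -- identically distributed pairs
  have pairID : ∀ i j : Fin N, i ≠ j →
      IdentDistrib (fun ω => ((Qh i ω, Jh i ω), (Qh j ω, Jh j ω)))
        (fun ω => ((Qh i0 ω, Jh i0 ω), (Qh i1 ω, Jh i1 ω))) μ μ := by
    intro i j hij
    have hmap : ∀ a b : Fin N, a ≠ b →
        μ.map (fun ω => ((Qh a ω, Jh a ω), (Qh b ω, Jh b ω))) =
          (μ.map (fun ω => (Qh i0 ω, Jh i0 ω))).prod
            (μ.map (fun ω => (Qh i0 ω, Jh i0 ω))) := by
      intro a b hab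
      rw [(ProbabilityTheory.indepFun_iff_map_prod_eq_prod_map_map
        (hmeas a).aemeasurable (hmeas b).aemeasurable).1 (hindep.indepFun hab),
        (hid a i0).map_eq, (hid b i0).map_eq]
    exact ⟨((hmeas i).prodMk (hmeas j)).aemeasurable,
      ((hmeas i0).prodMk (hmeas i1)).aemeasurable, by rw [hmap i j hij, hmap i0 i1 h01]⟩
  have covA_id : ∀ (i : Fin N) (p q : Fin n),
      cov μ (PA i p) (PA i q) = cov μ (PA i0 p) (PA i0 q) :=
    fun i p q => cov_identDistrib ((hid i i0).comp
      ((measurable_psiA J Q p).prodMk (measurable_psiA J Q q)))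
  have covB_id : ∀ (i j : Fin N) (p q : Fin n), i ≠ j →
      cov μ (PB i j p) (PB i j q) = cov μ (PB i0 i1 p) (PB i0 i1 q) :=
    fun i j p q hij => cov_identDistrib ((pairID i j hij).comp
      ((measurable_psiB J Q p).prodMk (measurable_psiB J Q q)))
  have covBs_id : ∀ (i j : Fin N) (p q : Fin n), i ≠ j →
      cov μ (PB i j p) (PB j i q) = cov μ (PB i0 i1 p) (PB i1 i0 q) :=
    fun i j p q hij => cov_identDistrib ((pairID i j hij).comp
      ((measurable_psiB J Q p).prodMk
        ((measurable_psiB J Q q).comp (measurable_snd.prodMk measurable_fst))))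
  have covAA0 : ∀ (i k : Fin N) (p q : Fin n), i ≠ k → cov μ (PA i p) (PA k q) = 0 := by
    intro i k p q hik
    exact cov_indep ((hindep.indepFun hik).comp (measurable_psiA J Q p) (measurable_psiA J Q q))
      ((measurable_psiA J Q p).comp (hmeas i)).aestronglyMeasurable
      ((measurable_psiA J Q q).comp (hmeas k)).aestronglyMeasurable
  have hB0 : ∀ (k l : Fin N) (q : Fin n), k ≠ l → (∫ ω, PB k l q ω ∂μ) = 0 := by
    intro k l q hkl
    have he : (fun ω => PB k l q ω) =
        fun ω => ∑ r, (Jh k ω r q - J r q) * (Qh l ω r - Q r) := rfl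
    rw [he, integral_finset_sum _ fun r _ => integrable_mul₂ (hJc2 k r q) (hQc2 l r)]
    refine Finset.sum_eq_zero fun r _ => ?_
    rw [show (∫ ω, (Jh k ω r q - J r q) * (Qh l ω r - Q r) ∂μ) =
        (∫ ω, (Jh k ω r q - J r q) ∂μ) * ∫ ω, (Qh l ω r - Q r) ∂μ from
      hint2 k l (fun v => v.2 r q - J r q) (fun v => v.1 r - Q r) hkl
        ((measurable_c2 r q).sub measurable_const) ((measurable_c1 r).sub measurable_const),
      hQc0 l r, mul_zero]
  have covAB0 : ∀ (i k l : Fin N) (p q : Fin n), k ≠ l → cov μ (PA i p) (PB k l q) = 0 := by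
    intro i k l p q hkl
    have hABz : (∫ ω, PA i p ω * PB k l q ω ∂μ) = 0 := by
      by_cases hik : i = k
      · subst hik
        rw [show (fun ω => PA i p ω * PB i l q ω) = fun ω =>
            ∑ r, PA i p ω * (Jh i ω r q - J r q) * (Qh l ω r - Q r) from funext fun ω => by
          simp only [hPBeq, Finset.mul_sum]
          exact Finset.sum_congr rfl fun r _ => by ring]
        have hInt : ∀ r : Fin m,
            Integrable (fun ω => PA i p ω * (Jh i ω r q - J r q) * (Qh l ω r - Q r)) μ := by
          intro r
          have hfa : Integrable (fun ω => PA i p ω * (Jh i ω r q - J r q)) μ :=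
            integrable_mul₂ (hA2 i p) (hJc2 i r q)
          have hgb : Integrable (fun ω => Qh l ω r - Q r) μ := memLp2_int (hQc2 l r)
          have hind : IndepFun (fun ω => PA i p ω * (Jh i ω r q - J r q))
              (fun ω => Qh l ω r - Q r) μ :=
            (hindep.indepFun hkl).comp
              ((measurable_psiA J Q p).mul ((measurable_c2 r q).sub measurable_const))
              ((measurable_c1 r).sub measurable_const)
          exact hind.integrable_mul hfa hgb
        rw [integral_finset_sum _ fun r _ => hInt r]
        refine Finset.sum_eq_zero fun r _ => ?_
        rw [show (∫ ω, PA i p ω * (Jh i ω r q - J r q) * (Qh l ω r - Q r) ∂μ) =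
            (∫ ω, PA i p ω * (Jh i ω r q - J r q) ∂μ) * ∫ ω, (Qh l ω r - Q r) ∂μ from
          hint2 i l (fun v => psiA J Q p v * (v.2 r q - J r q)) (fun v => v.1 r - Q r) hkl
            ((measurable_psiA J Q p).mul ((measurable_c2 r q).sub measurable_const))
            ((measurable_c1 r).sub measurable_const), hQc0 l r, mul_zero]
      · by_cases hil : i = l
        · subst hil
          rw [show (fun ω => PA i p ω * PB k i q ω) = fun ω =>
              ∑ r, PA i p ω * (Qh i ω r - Q r) * (Jh k ω r q - J r q) from funext fun ω => by
            simp only [hPBeq, Finset.mul_sum]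
            exact Finset.sum_congr rfl fun r _ => by ring]
          have hInt : ∀ r : Fin m,
              Integrable (fun ω => PA i p ω * (Qh i ω r - Q r) * (Jh k ω r q - J r q)) μ := by
            intro r
            have hfa : Integrable (fun ω => PA i p ω * (Qh i ω r - Q r)) μ :=
              integrable_mul₂ (hA2 i p) (hQc2 i r)
            have hgb : Integrable (fun ω => Jh k ω r q - J r q) μ := memLp2_int (hJc2 k r q)
            have hind : IndepFun (fun ω => PA i p ω * (Qh i ω r - Q r))
                (fun ω => Jh k ω r q - J r q) μ :=
              (hindep.indepFun hik).comp
                ((measurable_psiA J Q p).mul ((measurable_c1 r).sub measurable_const))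
                ((measurable_c2 r q).sub measurable_const)
            exact hind.integrable_mul hfa hgb
          rw [integral_finset_sum _ fun r _ => hInt r]
          refine Finset.sum_eq_zero fun r _ => ?_
          rw [show (∫ ω, PA i p ω * (Qh i ω r - Q r) * (Jh k ω r q - J r q) ∂μ) =
              (∫ ω, PA i p ω * (Qh i ω r - Q r) ∂μ) * ∫ ω, (Jh k ω r q - J r q) ∂μ from
            hint2 i k (fun v => psiA J Q p v * (v.1 r - Q r)) (fun v => v.2 r q - J r q)
              hik
              ((measurable_psiA J Q p).mul ((measurable_c1 r).sub measurable_const))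
              ((measurable_c2 r q).sub measurable_const), hJc0 k r q, mul_zero]
        · rw [show (∫ ω, PA i p ω * PB k l q ω ∂μ) =
              (∫ ω, PA i p ω ∂μ) * ∫ ω, PB k l q ω ∂μ from
            hint1p i k l (psiA J Q p) (psiB J Q q) (Ne.symm hik) (Ne.symm hil)
              (measurable_psiA J Q p) (measurable_psiB J Q q), hB0 k l q hkl, mul_zero]
    unfold cov
    rw [hABz, hB0 k l q hkl]
    ring

  have covBB0 : ∀ (i j k l : Fin N) (p q : Fin n), i ≠ j → k ≠ l →
      ¬(k = i ∧ l = j) → ¬(k = j ∧ l = i) → cov μ (PB i j p) (PB k l q) = 0 := by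
    intro i j k l p q hij hkl hne1 hne2
    have hz : (∫ ω, PB i j p ω * PB k l q ω ∂μ) = 0 := by
      by_cases hki : i = k
      · subst hki
        have hil : i ≠ l := hkl
        have hjl : j ≠ l := fun h => hne1 ⟨rfl, h.symm⟩
        have key : ∀ r s : Fin m,
            Integrable (fun ω => (Jh i ω r p - J r p) * (Jh i ω s q - J s q) *
              (Qh j ω r - Q r) * (Qh l ω s - Q s)) μ ∧
            (∫ ω, (Jh i ω r p - J r p) * (Jh i ω s q - J s q) *
              (Qh j ω r - Q r) * (Qh l ω s - Q s) ∂μ) =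
            (∫ ω, (Jh i ω r p - J r p) * (Jh i ω s q - J s q) ∂μ) *
              (∫ ω, (Qh j ω r - Q r) ∂μ) * ∫ ω, (Qh l ω s - Q s) ∂μ := by
          intro r s
          have hIf : Integrable (fun ω => (Jh i ω r p - J r p) * (Jh i ω s q - J s q)) μ :=
            integrable_mul₂ (hJc2 i r p) (hJc2 i s q)
          exact hint3 i j l (fun v => (v.2 r p - J r p) * (v.2 s q - J s q))
            (fun v => v.1 r - Q r) (fun v => v.1 s - Q s) hij hil hjl
            ((((measurable_c2 r p).sub measurable_const)).mul
              ((measurable_c2 s q).sub measurable_const))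
            ((measurable_c1 r).sub measurable_const) ((measurable_c1 s).sub measurable_const)
            hIf (memLp2_int (hQc2 j r)) (memLp2_int (hQc2 l s))
        rw [show (fun ω => PB i j p ω * PB i l q ω) = fun ω => ∑ r, ∑ s,
            (Jh i ω r p - J r p) * (Jh i ω s q - J s q) *
              (Qh j ω r - Q r) * (Qh l ω s - Q s) from funext fun ω => by
          simp only [hPBeq]
          rw [Finset.sum_mul_sum]
          exact Finset.sum_congr rfl fun r _ => Finset.sum_congr rfl fun s _ => by ring]
        rw [integral_finset_sum _ fun r _ => integrable_finset_sum _ fun s _ => (key r s).1]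
        refine Finset.sum_eq_zero fun r _ => ?_
        rw [integral_finset_sum _ fun s _ => (key r s).1]
        refine Finset.sum_eq_zero fun s _ => ?_
        rw [(key r s).2, hQc0 j r]
        ring
      · by_cases hkj : j = k
        · subst hkj
          have hjl : j ≠ l := hkl
          have hji : j ≠ i := Ne.symm hij
          have hil : i ≠ l := fun h => hne2 ⟨rfl, h.symm⟩
          have key : ∀ r s : Fin m,
              Integrable (fun ω => (Qh j ω r - Q r) * (Jh j ω s q - J s q) *
                (Jh i ω r p - J r p) * (Qh l ω s - Q s)) μ ∧
              (∫ ω, (Qh j ω r - Q r) * (Jh j ω s q - J s q) *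
                (Jh i ω r p - J r p) * (Qh l ω s - Q s) ∂μ) =
              (∫ ω, (Qh j ω r - Q r) * (Jh j ω s q - J s q) ∂μ) *
                (∫ ω, (Jh i ω r p - J r p) ∂μ) * ∫ ω, (Qh l ω s - Q s) ∂μ := by
            intro r s
            have hIf : Integrable (fun ω => (Qh j ω r - Q r) * (Jh j ω s q - J s q)) μ :=
              integrable_mul₂ (hQc2 j r) (hJc2 j s q)
            exact hint3 j i l (fun v => (v.1 r - Q r) * (v.2 s q - J s q))
              (fun v => v.2 r p - J r p) (fun v => v.1 s - Q s) hji hjl hil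
              (((measurable_c1 r).sub measurable_const).mul
                ((measurable_c2 s q).sub measurable_const))
              ((measurable_c2 r p).sub measurable_const)
              ((measurable_c1 s).sub measurable_const)
              hIf (memLp2_int (hJc2 i r p)) (memLp2_int (hQc2 l s))
          rw [show (fun ω => PB i j p ω * PB j l q ω) = fun ω => ∑ r, ∑ s,
              (Qh j ω r - Q r) * (Jh j ω s q - J s q) *
                (Jh i ω r p - J r p) * (Qh l ω s - Q s) from funext fun ω => by
            simp only [hPBeq]
            rw [Finset.sum_mul_sum]
            exact Finset.sum_congr rfl fun r _ => Finset.sum_congr rfl fun s _ => by ring]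
          rw [integral_finset_sum _ fun r _ => integrable_finset_sum _ fun s _ => (key r s).1]
          refine Finset.sum_eq_zero fun r _ => ?_
          rw [integral_finset_sum _ fun s _ => (key r s).1]
          refine Finset.sum_eq_zero fun s _ => ?_
          rw [(key r s).2, hJc0 i r p]
          ring
        · by_cases hli : i = l
          · subst hli
            have hik : i ≠ k := hki
            have hjk : j ≠ k := hkj
            have key : ∀ r s : Fin m,
                Integrable (fun ω => (Jh i ω r p - J r p) * (Qh i ω s - Q s) *
                  (Qh j ω r - Q r) * (Jh k ω s q - J s q)) μ ∧
                (∫ ω, (Jh i ω r p - J r p) * (Qh i ω s - Q s) *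
                  (Qh j ω r - Q r) * (Jh k ω s q - J s q) ∂μ) =
                (∫ ω, (Jh i ω r p - J r p) * (Qh i ω s - Q s) ∂μ) *
                  (∫ ω, (Qh j ω r - Q r) ∂μ) * ∫ ω, (Jh k ω s q - J s q) ∂μ := by
              intro r s
              have hIf : Integrable (fun ω => (Jh i ω r p - J r p) * (Qh i ω s - Q s)) μ :=
                integrable_mul₂ (hJc2 i r p) (hQc2 i s)
              exact hint3 i j k (fun v => (v.2 r p - J r p) * (v.1 s - Q s))
                (fun v => v.1 r - Q r) (fun v => v.2 s q - J s q) hij hik hjk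
                (((measurable_c2 r p).sub measurable_const).mul
                  ((measurable_c1 s).sub measurable_const))
                ((measurable_c1 r).sub measurable_const)
                ((measurable_c2 s q).sub measurable_const)
                hIf (memLp2_int (hQc2 j r)) (memLp2_int (hJc2 k s q))
            rw [show (fun ω => PB i j p ω * PB k i q ω) = fun ω => ∑ r, ∑ s,
                (Jh i ω r p - J r p) * (Qh i ω s - Q s) *
                  (Qh j ω r - Q r) * (Jh k ω s q - J s q) from funext fun ω => by
              simp only [hPBeq]
              rw [Finset.sum_mul_sum]
              exact Finset.sum_congr rfl fun r _ => Finset.sum_congr rfl fun s _ => by ring]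
            rw [integral_finset_sum _ fun r _ => integrable_finset_sum _ fun s _ => (key r s).1]
            refine Finset.sum_eq_zero fun r _ => ?_
            rw [integral_finset_sum _ fun s _ => (key r s).1]
            refine Finset.sum_eq_zero fun s _ => ?_
            rw [(key r s).2, hQc0 j r]
            ring
          · by_cases hlj : j = l
            · subst hlj
              have hik : i ≠ k := hki
              have hjk : j ≠ k := hkj
              have hji : j ≠ i := Ne.symm hij
              have key : ∀ r s : Fin m,
                  Integrable (fun ω => (Qh j ω r - Q r) * (Qh j ω s - Q s) *
                    (Jh i ω r p - J r p) * (Jh k ω s q - J s q)) μ ∧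
                  (∫ ω, (Qh j ω r - Q r) * (Qh j ω s - Q s) *
                    (Jh i ω r p - J r p) * (Jh k ω s q - J s q) ∂μ) =
                  (∫ ω, (Qh j ω r - Q r) * (Qh j ω s - Q s) ∂μ) *
                    (∫ ω, (Jh i ω r p - J r p) ∂μ) * ∫ ω, (Jh k ω s q - J s q) ∂μ := by
                intro r s
                have hIf : Integrable (fun ω => (Qh j ω r - Q r) * (Qh j ω s - Q s)) μ :=
                  integrable_mul₂ (hQc2 j r) (hQc2 j s)
                exact hint3 j i k (fun v => (v.1 r - Q r) * (v.1 s - Q s))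
                  (fun v => v.2 r p - J r p) (fun v => v.2 s q - J s q) hji hjk hik
                  (((measurable_c1 r).sub measurable_const).mul
                    ((measurable_c1 s).sub measurable_const))
                  ((measurable_c2 r p).sub measurable_const)
                  ((measurable_c2 s q).sub measurable_const)
                  hIf (memLp2_int (hJc2 i r p)) (memLp2_int (hJc2 k s q))
              rw [show (fun ω => PB i j p ω * PB k j q ω) = fun ω => ∑ r, ∑ s,
                  (Qh j ω r - Q r) * (Qh j ω s - Q s) *
                    (Jh i ω r p - J r p) * (Jh k ω s q - J s q) from funext fun ω => by
                simp only [hPBeq]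
                rw [Finset.sum_mul_sum]
                exact Finset.sum_congr rfl fun r _ => Finset.sum_congr rfl fun s _ => by ring]
              rw [integral_finset_sum _ fun r _ =>
                integrable_finset_sum _ fun s _ => (key r s).1]
              refine Finset.sum_eq_zero fun r _ => ?_
              rw [integral_finset_sum _ fun s _ => (key r s).1]
              refine Finset.sum_eq_zero fun s _ => ?_
              rw [(key r s).2, hJc0 i r p]
              ring
            · rw [show (∫ ω, PB i j p ω * PB k l q ω ∂μ) =
                  (∫ ω, PB i j p ω ∂μ) * ∫ ω, PB k l q ω ∂μ from
                hint22 i j k l (psiB J Q p) (psiB J Q q) hki hli hkj hlj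
                  (measurable_psiB J Q p) (measurable_psiB J Q q),
                hB0 i j p hij, zero_mul]
    unfold cov
    rw [hz, hB0 i j p hij]
    ring
  
  -- the function-valued summands for the B-part
  set FB : Fin n → Fin N × Fin N → Ω → ℝ :=
    fun p ij => if ij.1 ≠ ij.2 then (fun ω => c * PB ij.1 ij.2 p ω) else fun _ => 0 with hFB
  have hFB2 : ∀ p ij, MemLp (FB p ij) 2 μ := by
    intro p ij
    simp only [hFB]
    split
    · exact (hB2 _ _ _).const_mul c
    · exact memLp_const 0
  have hSA2 : ∀ p, MemLp (fun ω => ∑ i, (1/(N:ℝ)) * PA i p ω) 2 μ :=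
    fun p => memLp_finset_sum _ fun i _ => (hA2 i p).const_mul _
  have hSB2 : ∀ p, MemLp (fun ω => ∑ ij : Fin N × Fin N, FB p ij ω) 2 μ :=
    fun p => memLp_finset_sum _ fun ij _ => hFB2 p ij
  have hS2 : ∀ p, MemLp (fun ω =>
      (∑ i, (1/(N:ℝ)) * PA i p ω) + ∑ ij : Fin N × Fin N, FB p ij ω) 2 μ :=
    fun p => (hSA2 p).add (hSB2 p)
  -- decomposition of the estimator components
  have eG : ∀ p : Fin n, (fun ω => (c • ∑ i : Fin N, ∑ j : Fin N,
      if i ≠ j then (Jh i ω)ᵀ.mulVec (Qh j ω) else 0) p) =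
      fun ω => ((∑ i, (1/(N:ℝ)) * PA i p ω) + ∑ ij : Fin N × Fin N, FB p ij ω) +
        (-(∑ r, J r p * Q r)) := by
    intro p
    funext ω
    have hmv : ∀ i j : Fin N, ((Jh i ω)ᵀ.mulVec (Qh j ω)) p =
        PB i j p ω + (∑ r, J r p * Qh j ω r) + (∑ r, Jh i ω r p * Q r) -
          (∑ r, J r p * Q r) := by
      intro i j
      simp only [hPBeq, Matrix.mulVec, dotProduct, Matrix.transpose_apply, sub_mul, mul_sub,
        Finset.sum_sub_distrib]
      ring
    have key : ∀ i j : Fin N, (if i ≠ j then (Jh i ω)ᵀ.mulVec (Qh j ω) else 0) p =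
        (if i ≠ j then PB i j p ω else 0) +
          (if i ≠ j then (∑ r, J r p * Qh j ω r) else 0) +
          (if i ≠ j then (∑ r, Jh i ω r p * Q r) else 0) -
          (if i ≠ j then (∑ r, J r p * Q r) else 0) := by
      intro i j
      by_cases h : i ≠ j
      · simp only [if_pos h]
        exact hmv i j
      · simp [if_neg h]
    simp only [Pi.smul_apply, smul_eq_mul, Finset.sum_apply]
    rw [Finset.sum_congr rfl fun i _ => Finset.sum_congr rfl fun j _ => key i j]
    simp only [Finset.sum_add_distrib, Finset.sum_sub_distrib]
    have hSQ : (∑ i : Fin N, ∑ j : Fin N, if i ≠ j then (∑ r, J r p * Qh j ω r) else 0) =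
        (N:ℝ) * (∑ j : Fin N, ∑ r, J r p * Qh j ω r) - ∑ j : Fin N, ∑ r, J r p * Qh j ω r := by
      rw [Finset.sum_congr rfl fun i _ => sum_ite_ne_fun (fun j => ∑ r, J r p * Qh j ω r) i,
        Finset.sum_sub_distrib, Finset.sum_const, Finset.card_univ, Fintype.card_fin,
        nsmul_eq_mul]
    have hSJ : (∑ i : Fin N, ∑ j : Fin N, if i ≠ j then (∑ r, Jh i ω r p * Q r) else 0) =
        (N:ℝ) * (∑ i : Fin N, ∑ r, Jh i ω r p * Q r) - ∑ i : Fin N, ∑ r, Jh i ω r p * Q r := by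
      rw [Finset.sum_congr rfl fun i _ => (by
        rw [sum_ite_ne_fun (fun _ => ∑ r, Jh i ω r p * Q r) i, Finset.sum_const,
          Finset.card_univ, Fintype.card_fin, nsmul_eq_mul] :
        (∑ j : Fin N, if i ≠ j then (∑ r, Jh i ω r p * Q r) else 0) =
          (N:ℝ) * (∑ r, Jh i ω r p * Q r) - (∑ r, Jh i ω r p * Q r)),
        Finset.sum_sub_distrib, ← Finset.mul_sum]
    have hSK : (∑ i : Fin N, ∑ j : Fin N, if i ≠ j then (∑ r, J r p * Q r) else 0) =
        (N:ℝ) * ((N:ℝ) * (∑ r, J r p * Q r) - (∑ r, J r p * Q r)) := by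
      rw [Finset.sum_congr rfl fun i _ => (by
        rw [sum_ite_ne_fun (fun _ => ∑ r, J r p * Q r) i, Finset.sum_const,
          Finset.card_univ, Fintype.card_fin, nsmul_eq_mul] :
        (∑ j : Fin N, if i ≠ j then (∑ r, J r p * Q r) else 0) =
          (N:ℝ) * (∑ r, J r p * Q r) - (∑ r, J r p * Q r)),
        Finset.sum_const, Finset.card_univ, Fintype.card_fin, nsmul_eq_mul]
    rw [hSQ, hSJ, hSK]
    have hPAsum : (∑ i, (1/(N:ℝ)) * PA i p ω) =
        (1/(N:ℝ)) * ((∑ j : Fin N, ∑ r, J r p * Qh j ω r) +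
          ∑ i : Fin N, ∑ r, Jh i ω r p * Q r) := by
      rw [← Finset.mul_sum]
      congr 1
      rw [← Finset.sum_add_distrib]
      exact Finset.sum_congr rfl fun i _ => by simp only [hPAeq]
    have hFBsum : (∑ ij : Fin N × Fin N, FB p ij ω) =
        c * ∑ i : Fin N, ∑ j : Fin N, if i ≠ j then PB i j p ω else 0 := by
      rw [Fintype.sum_prod_type]
      simp only [hFB, Finset.mul_sum, mul_ite, mul_zero, ite_apply]
    rw [hPAsum, hFBsum, hcdef]
    field_simp
    ring
  refine ⟨?_, ?_, ?_⟩
  · -- main covariance identity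
    ext p q
    simp only [Matrix.add_apply, Matrix.smul_apply, smul_eq_mul, vecVar_apply]
    rw [show (fun ω => (Jᵀ.mulVec (Qh i0 ω) + (Jh i0 ω)ᵀ.mulVec Q) p) = PA i0 p from rfl,
      show (fun ω => (Jᵀ.mulVec (Qh i0 ω) + (Jh i0 ω)ᵀ.mulVec Q) q) = PA i0 q from rfl,
      show (fun ω => ((Jh i0 ω - J)ᵀ.mulVec (Qh i1 ω - Q) +
          (Jh i1 ω - J)ᵀ.mulVec (Qh i0 ω - Q)) p) =
        (fun ω => PB i0 i1 p ω + PB i1 i0 p ω) from rfl,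
      show (fun ω => ((Jh i0 ω - J)ᵀ.mulVec (Qh i1 ω - Q) +
          (Jh i1 ω - J)ᵀ.mulVec (Qh i0 ω - Q)) q) =
        (fun ω => PB i0 i1 q ω + PB i1 i0 q ω) from rfl,
      eG p, eG q]
    set vA := cov μ (PA i0 p) (PA i0 q) with hvA
    set vB1 := cov μ (PB i0 i1 p) (PB i0 i1 q) with hvB1
    set vB2 := cov μ (PB i0 i1 p) (PB i1 i0 q) with hvB2
    have covG : cov μ (fun ω => ((∑ i, (1/(N:ℝ)) * PA i p ω) +
          ∑ ij : Fin N × Fin N, FB p ij ω) + (-(∑ r, J r p * Q r)))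
        (fun ω => ((∑ i, (1/(N:ℝ)) * PA i q ω) +
          ∑ ij : Fin N × Fin N, FB q ij ω) + (-(∑ r, J r q * Q r))) =
        cov μ (fun ω => (∑ i, (1/(N:ℝ)) * PA i p ω) + ∑ ij : Fin N × Fin N, FB p ij ω)
          (fun ω => (∑ i, (1/(N:ℝ)) * PA i q ω) + ∑ ij : Fin N × Fin N, FB q ij ω) :=
      cov_add_const (hS2 p) (hS2 q) _ _
    have e4 : cov μ (fun ω => (∑ i, (1/(N:ℝ)) * PA i p ω) + ∑ ij : Fin N × Fin N, FB p ij ω)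
        (fun ω => (∑ i, (1/(N:ℝ)) * PA i q ω) + ∑ ij : Fin N × Fin N, FB q ij ω) =
        cov μ (fun ω => ∑ i, (1/(N:ℝ)) * PA i p ω) (fun ω => ∑ i, (1/(N:ℝ)) * PA i q ω) +
        cov μ (fun ω => ∑ i, (1/(N:ℝ)) * PA i p ω) (fun ω => ∑ ij : Fin N × Fin N, FB q ij ω) +
        cov μ (fun ω => ∑ ij : Fin N × Fin N, FB p ij ω) (fun ω => ∑ i, (1/(N:ℝ)) * PA i q ω) +
        cov μ (fun ω => ∑ ij : Fin N × Fin N, FB p ij ω)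
          (fun ω => ∑ ij : Fin N × Fin N, FB q ij ω) :=
      cov_add_add (hSA2 p) (hSB2 p) (hSA2 q) (hSB2 q)
    have e5 : cov μ (fun ω => ∑ i, (1/(N:ℝ)) * PA i p ω)
        (fun ω => ∑ i, (1/(N:ℝ)) * PA i q ω) =
        ∑ i : Fin N, ∑ k : Fin N, cov μ (fun ω => (1/(N:ℝ)) * PA i p ω)
          (fun ω => (1/(N:ℝ)) * PA k q ω) :=
      cov_sum_sum _ _ _ _ (fun i _ => (hA2 i p).const_mul _) (fun k _ => (hA2 k q).const_mul _)
    have e6 : cov μ (fun ω => ∑ i, (1/(N:ℝ)) * PA i p ω)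
        (fun ω => ∑ ij : Fin N × Fin N, FB q ij ω) =
        ∑ i : Fin N, ∑ ij : Fin N × Fin N, cov μ (fun ω => (1/(N:ℝ)) * PA i p ω) (FB q ij) :=
      cov_sum_sum _ _ _ _ (fun i _ => (hA2 i p).const_mul _) (fun ij _ => hFB2 q ij)
    have e7 : cov μ (fun ω => ∑ ij : Fin N × Fin N, FB p ij ω)
        (fun ω => ∑ i, (1/(N:ℝ)) * PA i q ω) =
        ∑ ij : Fin N × Fin N, ∑ i : Fin N, cov μ (FB p ij) (fun ω => (1/(N:ℝ)) * PA i q ω) :=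
      cov_sum_sum _ _ _ _ (fun ij _ => hFB2 p ij) (fun i _ => (hA2 i q).const_mul _)
    have e8 : cov μ (fun ω => ∑ ij : Fin N × Fin N, FB p ij ω)
        (fun ω => ∑ ij : Fin N × Fin N, FB q ij ω) =
        ∑ ij : Fin N × Fin N, ∑ kl : Fin N × Fin N, cov μ (FB p ij) (FB q kl) :=
      cov_sum_sum _ _ _ _ (fun ij _ => hFB2 p ij) (fun kl _ => hFB2 q kl)
    have tAA : (∑ i : Fin N, ∑ k : Fin N, cov μ (fun ω => (1/(N:ℝ)) * PA i p ω)
        (fun ω => (1/(N:ℝ)) * PA k q ω)) = (1/(N:ℝ)) * vA := by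
      have h1 : ∀ i k : Fin N, cov μ (fun ω => (1/(N:ℝ)) * PA i p ω)
          (fun ω => (1/(N:ℝ)) * PA k q ω) =
          (1/(N:ℝ)) * ((1/(N:ℝ)) * (if i = k then vA else 0)) := by
        intro i k
        rw [cov_const_mul, cov_mul_const]
        by_cases h : i = k
        · subst h
          rw [covA_id i p q, if_pos rfl, hvA]
        · rw [covAA0 i k p q h, if_neg h]
      rw [Finset.sum_congr rfl fun i _ => Finset.sum_congr rfl fun k _ => h1 i k]
      have h2 : ∀ i : Fin N,
          (∑ k : Fin N, (1/(N:ℝ)) * ((1/(N:ℝ)) * (if i = k then vA else 0))) =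
          (1/(N:ℝ)) * ((1/(N:ℝ)) * vA) := by
        intro i
        rw [← Finset.mul_sum]
        congr 1
        rw [← Finset.mul_sum]
        congr 1
        simp [Finset.sum_ite_eq]
      rw [Finset.sum_congr rfl fun i _ => h2 i, Finset.sum_const, Finset.card_univ,
        Fintype.card_fin, nsmul_eq_mul]
      field_simp
    have tAB : (∑ i : Fin N, ∑ ij : Fin N × Fin N,
        cov μ (fun ω => (1/(N:ℝ)) * PA i p ω) (FB q ij)) = 0 := by
      refine Finset.sum_eq_zero fun i _ => Finset.sum_eq_zero fun ij _ => ?_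
      by_cases h : ij.1 ≠ ij.2
      · simp only [hFB]
        rw [if_pos h, cov_const_mul, cov_mul_const, covAB0 i ij.1 ij.2 p q h, mul_zero,
          mul_zero]
      · simp only [hFB]
        rw [if_neg h]
        exact cov_zero_right _
    have tBA : (∑ ij : Fin N × Fin N, ∑ i : Fin N,
        cov μ (FB p ij) (fun ω => (1/(N:ℝ)) * PA i q ω)) = 0 := by
      refine Finset.sum_eq_zero fun ij _ => Finset.sum_eq_zero fun i _ => ?_
      by_cases h : ij.1 ≠ ij.2
      · simp only [hFB]
        rw [if_pos h, cov_comm, cov_const_mul, cov_mul_const, covAB0 i ij.1 ij.2 q p h,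
          mul_zero, mul_zero]
      · simp only [hFB]
        rw [if_neg h, cov_comm]
        exact cov_zero_right _
    have tBB : (∑ ij : Fin N × Fin N, ∑ kl : Fin N × Fin N, cov μ (FB p ij) (FB q kl)) =
        (N:ℝ) * ((N:ℝ) - 1) * (c * (c * (vB1 + vB2))) := by
      have inner : ∀ ij : Fin N × Fin N, (∑ kl : Fin N × Fin N, cov μ (FB p ij) (FB q kl)) =
          if ij.1 ≠ ij.2 then c * (c * (vB1 + vB2)) else 0 := by
        intro ij
        obtain ⟨i, j⟩ := ij
        dsimp only
        by_cases hij : i ≠ j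
        · rw [if_pos hij]
          have hterm : ∀ kl : Fin N × Fin N, cov μ (FB p (i, j)) (FB q kl) =
              (if kl = (i, j) then c * (c * vB1) else 0) +
              (if kl = (j, i) then c * (c * vB2) else 0) := by
            intro kl
            obtain ⟨k, l⟩ := kl
            by_cases hkl : k ≠ l
            · simp only [hFB]
              rw [if_pos hij, if_pos hkl, cov_const_mul, cov_mul_const]
              by_cases hk : i = k
              · subst hk
                by_cases hl : j = l
                · subst hl
                  rw [covB_id i j p q hij, ← hvB1, if_pos rfl,
                    if_neg (show ((i, j) : Fin N × Fin N) ≠ (j, i) from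
                      fun h => hij (congrArg Prod.fst h)), add_zero]
                · rw [covBB0 i j i l p q hij hkl (fun hc => hl hc.2.symm)
                    (fun hc => hij hc.1),
                    if_neg (show ((i, l) : Fin N × Fin N) ≠ (i, j) from
                      fun h => hl (congrArg Prod.snd h).symm),
                    if_neg (show ((i, l) : Fin N × Fin N) ≠ (j, i) from
                      fun h => hij (congrArg Prod.fst h))]
                  ring
              · by_cases hk2 : j = k
                · subst hk2
                  by_cases hl2 : i = l
                  · subst hl2
                    rw [covBs_id i j p q hij, ← hvB2,
                      if_neg (show ((j, i) : Fin N × Fin N) ≠ (i, j) from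
                        fun h => hij (congrArg Prod.fst h).symm), if_pos rfl, zero_add]
                  · rw [covBB0 i j j l p q hij hkl (fun hc => hij hc.1.symm)
                      (fun hc => hl2 hc.2.symm),
                      if_neg (show ((j, l) : Fin N × Fin N) ≠ (i, j) from
                        fun h => hij (congrArg Prod.fst h).symm),
                      if_neg (show ((j, l) : Fin N × Fin N) ≠ (j, i) from
                        fun h => hl2 (congrArg Prod.snd h).symm)]
                    ring
                · rw [covBB0 i j k l p q hij hkl (fun hc => hk hc.1.symm)
                    (fun hc => hk2 hc.1.symm),
                    if_neg (show ((k, l) : Fin N × Fin N) ≠ (i, j) from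
                      fun h => hk (congrArg Prod.fst h).symm),
                    if_neg (show ((k, l) : Fin N × Fin N) ≠ (j, i) from
                      fun h => hk2 (congrArg Prod.fst h).symm)]
                  ring
            · have hkl' : k = l := not_not.mp hkl
              have e1 : ((k, l) : Fin N × Fin N) ≠ (i, j) := by
                intro h
                rw [Prod.mk.injEq] at h
                exact hij (by rw [← h.1, ← h.2]; exact hkl')
              have e2 : ((k, l) : Fin N × Fin N) ≠ (j, i) := by
                intro h
                rw [Prod.mk.injEq] at h
                exact hij (by rw [← h.1, ← h.2]; exact hkl'.symm)
              simp only [hFB]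
              rw [if_neg hkl, cov_zero_right, if_neg e1, if_neg e2, add_zero]
          rw [Finset.sum_congr rfl fun kl _ => hterm kl, Finset.sum_add_distrib,
            Finset.sum_ite_eq' Finset.univ ((i, j) : Fin N × Fin N)
              (fun _ => c * (c * vB1)),
            Finset.sum_ite_eq' Finset.univ ((j, i) : Fin N × Fin N)
              (fun _ => c * (c * vB2))]
          simp only [Finset.mem_univ, if_pos]
          ring
        · rw [if_neg hij]
          refine Finset.sum_eq_zero fun kl _ => ?_
          simp only [hFB]
          rw [if_neg hij]
          exact cov_zero_left _
      rw [Finset.sum_congr rfl fun ij _ => inner ij, Fintype.sum_prod_type]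
      have h3 : ∀ i : Fin N, (∑ j : Fin N,
          if i ≠ j then c * (c * (vB1 + vB2)) else 0) =
          ((N:ℝ) - 1) * (c * (c * (vB1 + vB2))) := by
        intro i
        rw [sum_ite_ne_fun (fun _ => c * (c * (vB1 + vB2))) i, Finset.sum_const,
          Finset.card_univ, Fintype.card_fin, nsmul_eq_mul]
        ring
      rw [Finset.sum_congr rfl fun i _ => h3 i, Finset.sum_const, Finset.card_univ,
        Fintype.card_fin, nsmul_eq_mul]
      ring
    have hM2 : cov μ (fun ω => PB i0 i1 p ω + PB i1 i0 p ω)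
        (fun ω => PB i0 i1 q ω + PB i1 i0 q ω) = vB1 + vB2 + vB2 + vB1 := by
      rw [cov_add_add (hB2 i0 i1 p) (hB2 i1 i0 p) (hB2 i0 i1 q) (hB2 i1 i0 q),
        covBs_id i1 i0 p q h10, covB_id i1 i0 p q h10]
    rw [covG, e4, e5, e6, e7, e8, tAA, tAB, tBA, tBB, hM2, hcdef]
    field_simp
    ring
  · exact vecVar_posSemidef _ (fun p => hA2 i0 p)
  · exact posSemidef_smul (vecVar_posSemidef _
      (fun p => (hB2 i0 i1 p).add (hB2 i1 i0 p))) (by norm_num)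
end

section
/- Let (Q̂, Ĵ) and (Q̂′, Ĵ′) be two i.i.d. pairs of random elements of ℝ^m × ℝ^{m×n} with E[Q̂] = Q, E[Ĵ] = J and finite second moments of the relevant products. Writing ε_J = Ĵ − J, ε_Q = Q̂ − Q, ε_J′ = Ĵ′ − J, ε_Q′ = Q̂′ − Q, one has E[Ĵᵀ Q̂′ Q̂′ᵀ Ĵ + Ĵᵀ Q̂′ Q̂ᵀ Ĵ′ − Jᵀ Q̂ Q̂ᵀ J − Jᵀ Q̂ Qᵀ Ĵ − Ĵᵀ Q Q̂ᵀ J − Ĵᵀ Q Qᵀ Ĵ + 2 Jᵀ Q Qᵀ J] = (1/2) Var[ε_Jᵀ ε_Q′ + ε_J′ᵀ ε_Q]; in particular this matrix is positive semidefinite. -/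
open MeasureTheory Matrix

/-- Entrywise expectation of a random matrix. -/
noncomputable def matMean {Ω : Type*} [MeasurableSpace Ω] (μ : Measure Ω) {n m : ℕ}
    (X : Ω → Matrix (Fin n) (Fin m) ℝ) : Matrix (Fin n) (Fin m) ℝ :=
  Matrix.of fun i j => ∫ ω, X ω i j ∂μ

private lemma l2_mul_integrable {Ω : Type*} [MeasurableSpace Ω] {μ : Measure Ω} {f g : Ω → ℝ}
    (hf : MemLp f 2 μ) (hg : MemLp g 2 μ) :
    Integrable (fun ω => f ω * g ω) μ := by
  have h : MemLp (f • g) 1 μ := hg.smul hf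
  exact memLp_one_iff_integrable.mp h

private lemma cov_expand {Ω : Type*} [MeasurableSpace Ω] {μ : Measure Ω} [IsProbabilityMeasure μ]
    {f g : Ω → ℝ} (hf : MemLp f 2 μ) (hg : MemLp g 2 μ) (c d : ℝ) :
    ∫ ω, (f ω - c) * (g ω - d) ∂μ
      = (∫ ω, f ω * g ω ∂μ) - c * (∫ ω, g ω ∂μ) - d * (∫ ω, f ω ∂μ) + c * d := by
  have hfg := l2_mul_integrable hf hg
  have hfi : Integrable f μ := hf.integrable one_le_two
  have hgi : Integrable g μ := hg.integrable one_le_two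
  have h2 : Integrable (fun ω => f ω * g ω - c * g ω) μ := hfg.sub (hgi.const_mul c)
  have h1 : Integrable (fun ω => f ω * g ω - c * g ω - d * f ω) μ := h2.sub (hfi.const_mul d)
  have hpt : (fun ω => (f ω - c) * (g ω - d))
      = fun ω => f ω * g ω - c * g ω - d * f ω + c * d := funext fun ω => by ring
  rw [hpt, integral_add h1 (integrable_const _),
    integral_sub h2 (hfi.const_mul d),
    integral_sub hfg (hgi.const_mul c), integral_const_mul, integral_const_mul, integral_const]
  simp

private lemma tri_apply {m n : ℕ} (A : Matrix (Fin m) (Fin n) ℝ) (u v : Fin m → ℝ)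
    (B : Matrix (Fin m) (Fin n) ℝ) (a b : Fin n) :
    (Aᵀ * vecMulVec u v * B) a b = ∑ i, ∑ j, A i a * u i * v j * B j b := by
  have h : (Aᵀ * vecMulVec u v * B) a b = ∑ j, ∑ i, A i a * u i * v j * B j b := by
    simp only [Matrix.mul_apply, Matrix.vecMulVec_apply, Matrix.transpose_apply, Finset.sum_mul]
    exact Finset.sum_congr rfl fun j _ => Finset.sum_congr rfl fun i _ => by ring
  rw [h, Finset.sum_comm]
/-- for two i.i.d. pairs `(Q̂, Ĵ) ⊥ (Q̂′, Ĵ′)` of unbiased estimators of `Q`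
and `J` with finite second moments, writing `ε_J = Ĵ − J` etc.,
`E[ĴᵀQ̂′Q̂′ᵀĴ + ĴᵀQ̂′Q̂ᵀĴ′ − JᵀQ̂Q̂ᵀJ − JᵀQ̂QᵀĴ − ĴᵀQQ̂ᵀJ − ĴᵀQQᵀĴ + 2JᵀQQᵀJ]
  = (1/2)·Var[ε_Jᵀ ε_Q′ + ε_J′ᵀ ε_Q]`, which is in particular positive semidefinite. -/
theorem stmt3 {Ω : Type*} [MeasurableSpace Ω] (μ : Measure Ω) [IsProbabilityMeasure μ]
    {m n : ℕ}
    (Qh Qh' : Ω → Fin m → ℝ) (Jh Jh' : Ω → Matrix (Fin m) (Fin n) ℝ)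
    (Q : Fin m → ℝ) (J : Matrix (Fin m) (Fin n) ℝ)
    (hmeas : Measurable fun ω => (Qh ω, Jh ω))
    (hmeas' : Measurable fun ω => (Qh' ω, Jh' ω))
    (hindep : ProbabilityTheory.IndepFun (fun ω => (Qh ω, Jh ω))
      (fun ω => (Qh' ω, Jh' ω)) μ)
    (hid : ProbabilityTheory.IdentDistrib (fun ω => (Qh ω, Jh ω))
      (fun ω => (Qh' ω, Jh' ω)) μ μ)
    (hQunb : ∀ i, ∫ ω, Qh ω i ∂μ = Q i)
    (hJunb : ∀ i j, ∫ ω, Jh ω i j ∂μ = J i j)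
    (hQ2 : ∀ i, MemLp (fun ω => Qh ω i) 2 μ)
    (hJ2 : ∀ i j, MemLp (fun ω => Jh ω i j) 2 μ)
    (hQ2' : ∀ i, MemLp (fun ω => Qh' ω i) 2 μ)
    (hJ2' : ∀ i j, MemLp (fun ω => Jh' ω i j) 2 μ) :
    matMean μ (fun ω =>
        (Jh ω)ᵀ * vecMulVec (Qh' ω) (Qh' ω) * Jh ω +
          (Jh ω)ᵀ * vecMulVec (Qh' ω) (Qh ω) * Jh' ω -
          Jᵀ * vecMulVec (Qh ω) (Qh ω) * J - Jᵀ * vecMulVec (Qh ω) Q * Jh ω -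
          (Jh ω)ᵀ * vecMulVec Q (Qh ω) * J - (Jh ω)ᵀ * vecMulVec Q Q * Jh ω +
          (2 : ℝ) • (Jᵀ * vecMulVec Q Q * J)) =
      (1 / 2 : ℝ) • vecVar μ (fun ω =>
        (Jh ω - J)ᵀ.mulVec (Qh' ω - Q) + (Jh' ω - J)ᵀ.mulVec (Qh ω - Q)) ∧
    (matMean μ (fun ω =>
        (Jh ω)ᵀ * vecMulVec (Qh' ω) (Qh' ω) * Jh ω +
          (Jh ω)ᵀ * vecMulVec (Qh' ω) (Qh ω) * Jh' ω -
          Jᵀ * vecMulVec (Qh ω) (Qh ω) * J - Jᵀ * vecMulVec (Qh ω) Q * Jh ω -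
          (Jh ω)ᵀ * vecMulVec Q (Qh ω) * J - (Jh ω)ᵀ * vecMulVec Q Q * Jh ω +
          (2 : ℝ) • (Jᵀ * vecMulVec Q Q * J))).PosSemidef := by

  classical
  -- measurability of coordinate maps on the product space
  have mq : ∀ i : Fin m, Measurable fun p : (Fin m → ℝ) × Matrix (Fin m) (Fin n) ℝ => p.1 i :=
    fun i => (measurable_pi_apply i).comp measurable_fst
  have mj : ∀ (i : Fin m) (a : Fin n),
      Measurable fun p : (Fin m → ℝ) × Matrix (Fin m) (Fin n) ℝ => p.2 i a :=
    fun i a => (measurable_pi_apply a).comp ((measurable_pi_apply i).comp measurable_snd)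
  -- basic integrability
  have iQ : ∀ i, Integrable (fun ω => Qh ω i) μ := fun i => (hQ2 i).integrable one_le_two
  have iJ : ∀ i a, Integrable (fun ω => Jh ω i a) μ := fun i a => (hJ2 i a).integrable one_le_two
  have iQ' : ∀ i, Integrable (fun ω => Qh' ω i) μ := fun i => (hQ2' i).integrable one_le_two
  have iJ' : ∀ i a, Integrable (fun ω => Jh' ω i a) μ := fun i a => (hJ2' i a).integrable one_le_two
  have cJ2 : ∀ i a, MemLp (fun ω => Jh ω i a - J i a) 2 μ :=
    fun i a => (hJ2 i a).sub (memLp_const _)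
  have cQ2 : ∀ i, MemLp (fun ω => Qh ω i - Q i) 2 μ := fun i => (hQ2 i).sub (memLp_const _)
  have cJ2' : ∀ i a, MemLp (fun ω => Jh' ω i a - J i a) 2 μ :=
    fun i a => (hJ2' i a).sub (memLp_const _)
  have cQ2' : ∀ i, MemLp (fun ω => Qh' ω i - Q i) 2 μ := fun i => (hQ2' i).sub (memLp_const _)
  have zJ : ∀ i a, (∫ ω, (Jh ω i a - J i a) ∂μ) = 0 := fun i a => by
    rw [integral_sub (iJ i a) (integrable_const _), integral_const]
    simp [hJunb i a]
  have zQ : ∀ i, (∫ ω, (Qh ω i - Q i) ∂μ) = 0 := fun i => by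
    rw [integral_sub (iQ i) (integrable_const _), integral_const]
    simp [hQunb i]
  -- the independence/identical-distribution workhorse
  have genIndep : ∀ (u v : (Fin m → ℝ) × Matrix (Fin m) (Fin n) ℝ → ℝ),
      Measurable u → Measurable v →
      Integrable (fun ω => u (Qh ω, Jh ω)) μ → Integrable (fun ω => v (Qh' ω, Jh' ω)) μ →
      Integrable (fun ω => u (Qh ω, Jh ω) * v (Qh' ω, Jh' ω)) μ ∧
        (∫ ω, u (Qh ω, Jh ω) * v (Qh' ω, Jh' ω) ∂μ)
          = (∫ ω, u (Qh ω, Jh ω) ∂μ) * (∫ ω, v (Qh ω, Jh ω) ∂μ) := by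
    intro u v hu hv hiu hiv
    have hind : ProbabilityTheory.IndepFun (fun ω => u (Qh ω, Jh ω))
        (fun ω => v (Qh' ω, Jh' ω)) μ := hindep.comp hu hv
    refine ⟨hind.integrable_mul hiu hiv, ?_⟩
    have h2 : (∫ ω, v (Qh ω, Jh ω) ∂μ) = ∫ ω, v (Qh' ω, Jh' ω) ∂μ :=
      (hid.comp hv).integral_eq
    rw [hind.integral_fun_mul_eq_mul_integral hiu.1 hiv.1, ← h2]
  have genIndep' : ∀ (u v : (Fin m → ℝ) × Matrix (Fin m) (Fin n) ℝ → ℝ),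
      Measurable u → Measurable v →
      Integrable (fun ω => u (Qh ω, Jh ω)) μ → Integrable (fun ω => v (Qh' ω, Jh' ω)) μ →
      Integrable (fun ω => v (Qh' ω, Jh' ω) * u (Qh ω, Jh ω)) μ ∧
        (∫ ω, v (Qh' ω, Jh' ω) * u (Qh ω, Jh ω) ∂μ)
          = (∫ ω, u (Qh ω, Jh ω) ∂μ) * (∫ ω, v (Qh ω, Jh ω) ∂μ) := by
    intro u v hu hv hiu hiv
    have h := genIndep u v hu hv hiu hiv
    have hpt : (fun ω => v (Qh' ω, Jh' ω) * u (Qh ω, Jh ω))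
        = fun ω => u (Qh ω, Jh ω) * v (Qh' ω, Jh' ω) := funext fun ω => mul_comm _ _
    rw [hpt]
    exact h

  -- centered covariances in terms of raw second moments
  have hCJJ : ∀ i a j b, (∫ ω, (Jh ω i a - J i a) * (Jh ω j b - J j b) ∂μ)
      = (∫ ω, Jh ω i a * Jh ω j b ∂μ) - J i a * J j b := by
    intro i a j b
    rw [cov_expand (hJ2 i a) (hJ2 j b), hJunb, hJunb]
    ring
  have hCQQ : ∀ i j, (∫ ω, (Qh ω i - Q i) * (Qh ω j - Q j) ∂μ)
      = (∫ ω, Qh ω i * Qh ω j ∂μ) - Q i * Q j := by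
    intro i j
    rw [cov_expand (hQ2 i) (hQ2 j), hQunb, hQunb]
    ring
  have hCJQ : ∀ i a j, (∫ ω, (Jh ω i a - J i a) * (Qh ω j - Q j) ∂μ)
      = (∫ ω, Jh ω i a * Qh ω j ∂μ) - J i a * Q j := by
    intro i a j
    rw [cov_expand (hJ2 i a) (hQ2 j), hJunb, hQunb]
    ring
  have hCQJ : ∀ i j b, (∫ ω, (Qh ω i - Q i) * (Jh ω j b - J j b) ∂μ)
      = (∫ ω, Qh ω i * Jh ω j b ∂μ) - Q i * J j b := by
    intro i j b
    rw [cov_expand (hQ2 i) (hJ2 j b), hQunb, hJunb]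
    ring
  -- pointwise form of the random vector Y
  have hYpt : ∀ (ω : Ω) (a : Fin n),
      ((Jh ω - J)ᵀ.mulVec (Qh' ω - Q) + (Jh' ω - J)ᵀ.mulVec (Qh ω - Q)) a
        = ∑ i, ((Jh ω i a - J i a) * (Qh' ω i - Q i)
            + (Jh' ω i a - J i a) * (Qh ω i - Q i)) := by
    intro ω a
    simp [Matrix.mulVec, dotProduct, Matrix.transpose_apply, Matrix.sub_apply,
      Finset.sum_add_distrib]

  -- single-centered products (for E[Y] = 0)
  have ip1 : ∀ (i : Fin m) (a : Fin n),
      Integrable (fun ω => (Jh ω i a - J i a) * (Qh' ω i - Q i)) μ ∧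
        (∫ ω, (Jh ω i a - J i a) * (Qh' ω i - Q i) ∂μ)
          = (∫ ω, (Jh ω i a - J i a) ∂μ) * (∫ ω, (Qh ω i - Q i) ∂μ) :=
    fun i a => genIndep (fun p => p.2 i a - J i a) (fun p => p.1 i - Q i)
      ((mj i a).sub measurable_const) ((mq i).sub measurable_const)
      ((iJ i a).sub (integrable_const _)) ((iQ' i).sub (integrable_const _))
  have ip2 : ∀ (i : Fin m) (a : Fin n),
      Integrable (fun ω => (Jh' ω i a - J i a) * (Qh ω i - Q i)) μ ∧
        (∫ ω, (Jh' ω i a - J i a) * (Qh ω i - Q i) ∂μ)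
          = (∫ ω, (Qh ω i - Q i) ∂μ) * (∫ ω, (Jh ω i a - J i a) ∂μ) :=
    fun i a => genIndep' (fun p => p.1 i - Q i) (fun p => p.2 i a - J i a)
      ((mq i).sub measurable_const) ((mj i a).sub measurable_const)
      ((iQ i).sub (integrable_const _)) ((iJ' i a).sub (integrable_const _))
  have iYsum : ∀ (i : Fin m) (a : Fin n),
      Integrable (fun ω => (Jh ω i a - J i a) * (Qh' ω i - Q i)
        + (Jh' ω i a - J i a) * (Qh ω i - Q i)) μ := fun i a => (ip1 i a).1.add (ip2 i a).1
  have hYa0 : ∀ a : Fin n,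
      (∫ ω, ((Jh ω - J)ᵀ.mulVec (Qh' ω - Q) + (Jh' ω - J)ᵀ.mulVec (Qh ω - Q)) a ∂μ) = 0 := by
    intro a
    rw [integral_congr_ae (Filter.Eventually.of_forall fun ω => hYpt ω a),
      integral_finset_sum _ (fun i _ => iYsum i a)]
    refine Finset.sum_eq_zero fun i _ => ?_
    rw [integral_add (ip1 i a).1 (ip2 i a).1, (ip1 i a).2, (ip2 i a).2, zJ i a, zQ i]
    ring

  -- doubly-centered products (for E[Y Yᵀ])
  have cp1 : ∀ (i : Fin m) (a : Fin n) (j : Fin m) (b : Fin n),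
      Integrable (fun ω => (Jh ω i a - J i a) * (Jh ω j b - J j b)
          * ((Qh' ω i - Q i) * (Qh' ω j - Q j))) μ ∧
        (∫ ω, (Jh ω i a - J i a) * (Jh ω j b - J j b)
            * ((Qh' ω i - Q i) * (Qh' ω j - Q j)) ∂μ)
          = (∫ ω, (Jh ω i a - J i a) * (Jh ω j b - J j b) ∂μ)
            * (∫ ω, (Qh ω i - Q i) * (Qh ω j - Q j) ∂μ) :=
    fun i a j b => genIndep
      (fun p => (p.2 i a - J i a) * (p.2 j b - J j b))
      (fun p => (p.1 i - Q i) * (p.1 j - Q j))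
      (((mj i a).sub measurable_const).mul ((mj j b).sub measurable_const))
      (((mq i).sub measurable_const).mul ((mq j).sub measurable_const))
      (l2_mul_integrable (cJ2 i a) (cJ2 j b)) (l2_mul_integrable (cQ2' i) (cQ2' j))
  have cp2 : ∀ (i : Fin m) (a : Fin n) (j : Fin m) (b : Fin n),
      Integrable (fun ω => (Jh ω i a - J i a) * (Qh ω j - Q j)
          * ((Qh' ω i - Q i) * (Jh' ω j b - J j b))) μ ∧
        (∫ ω, (Jh ω i a - J i a) * (Qh ω j - Q j)
            * ((Qh' ω i - Q i) * (Jh' ω j b - J j b)) ∂μ)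
          = (∫ ω, (Jh ω i a - J i a) * (Qh ω j - Q j) ∂μ)
            * (∫ ω, (Qh ω i - Q i) * (Jh ω j b - J j b) ∂μ) :=
    fun i a j b => genIndep
      (fun p => (p.2 i a - J i a) * (p.1 j - Q j))
      (fun p => (p.1 i - Q i) * (p.2 j b - J j b))
      (((mj i a).sub measurable_const).mul ((mq j).sub measurable_const))
      (((mq i).sub measurable_const).mul ((mj j b).sub measurable_const))
      (l2_mul_integrable (cJ2 i a) (cQ2 j)) (l2_mul_integrable (cQ2' i) (cJ2' j b))
  have cp3 : ∀ (i : Fin m) (a : Fin n) (j : Fin m) (b : Fin n),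
      Integrable (fun ω => (Qh ω i - Q i) * (Jh ω j b - J j b)
          * ((Jh' ω i a - J i a) * (Qh' ω j - Q j))) μ ∧
        (∫ ω, (Qh ω i - Q i) * (Jh ω j b - J j b)
            * ((Jh' ω i a - J i a) * (Qh' ω j - Q j)) ∂μ)
          = (∫ ω, (Qh ω i - Q i) * (Jh ω j b - J j b) ∂μ)
            * (∫ ω, (Jh ω i a - J i a) * (Qh ω j - Q j) ∂μ) :=
    fun i a j b => genIndep
      (fun p => (p.1 i - Q i) * (p.2 j b - J j b))
      (fun p => (p.2 i a - J i a) * (p.1 j - Q j))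
      (((mq i).sub measurable_const).mul ((mj j b).sub measurable_const))
      (((mj i a).sub measurable_const).mul ((mq j).sub measurable_const))
      (l2_mul_integrable (cQ2 i) (cJ2 j b)) (l2_mul_integrable (cJ2' i a) (cQ2' j))
  have cp4 : ∀ (i : Fin m) (a : Fin n) (j : Fin m) (b : Fin n),
      Integrable (fun ω => (Qh ω i - Q i) * (Qh ω j - Q j)
          * ((Jh' ω i a - J i a) * (Jh' ω j b - J j b))) μ ∧
        (∫ ω, (Qh ω i - Q i) * (Qh ω j - Q j)
            * ((Jh' ω i a - J i a) * (Jh' ω j b - J j b)) ∂μ)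
          = (∫ ω, (Qh ω i - Q i) * (Qh ω j - Q j) ∂μ)
            * (∫ ω, (Jh ω i a - J i a) * (Jh ω j b - J j b) ∂μ) :=
    fun i a j b => genIndep
      (fun p => (p.1 i - Q i) * (p.1 j - Q j))
      (fun p => (p.2 i a - J i a) * (p.2 j b - J j b))
      (((mq i).sub measurable_const).mul ((mq j).sub measurable_const))
      (((mj i a).sub measurable_const).mul ((mj j b).sub measurable_const))
      (l2_mul_integrable (cQ2 i) (cQ2 j)) (l2_mul_integrable (cJ2' i a) (cJ2' j b))
  -- pointwise expansion of Y a * Y b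
  have hYmul : ∀ (a b : Fin n) (ω : Ω),
      ((Jh ω - J)ᵀ.mulVec (Qh' ω - Q) + (Jh' ω - J)ᵀ.mulVec (Qh ω - Q)) a
        * ((Jh ω - J)ᵀ.mulVec (Qh' ω - Q) + (Jh' ω - J)ᵀ.mulVec (Qh ω - Q)) b
      = ∑ i, ∑ j,
          ((Jh ω i a - J i a) * (Jh ω j b - J j b) * ((Qh' ω i - Q i) * (Qh' ω j - Q j))
          + (Jh ω i a - J i a) * (Qh ω j - Q j) * ((Qh' ω i - Q i) * (Jh' ω j b - J j b))
          + (Qh ω i - Q i) * (Jh ω j b - J j b) * ((Jh' ω i a - J i a) * (Qh' ω j - Q j))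
          + (Qh ω i - Q i) * (Qh ω j - Q j) * ((Jh' ω i a - J i a) * (Jh' ω j b - J j b))) := by
    intro a b ω
    rw [hYpt ω a, hYpt ω b, Finset.sum_mul_sum]
    exact Finset.sum_congr rfl fun i _ => Finset.sum_congr rfl fun j _ => by ring
  have iYY : ∀ (i : Fin m) (a : Fin n) (j : Fin m) (b : Fin n),
      Integrable (fun ω =>
          (Jh ω i a - J i a) * (Jh ω j b - J j b) * ((Qh' ω i - Q i) * (Qh' ω j - Q j))
          + (Jh ω i a - J i a) * (Qh ω j - Q j) * ((Qh' ω i - Q i) * (Jh' ω j b - J j b))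
          + (Qh ω i - Q i) * (Jh ω j b - J j b) * ((Jh' ω i a - J i a) * (Qh' ω j - Q j))
          + (Qh ω i - Q i) * (Qh ω j - Q j) * ((Jh' ω i a - J i a) * (Jh' ω j b - J j b))) μ :=
    fun i a j b => (((cp1 i a j b).1.add (cp2 i a j b).1).add (cp3 i a j b).1).add (cp4 i a j b).1
  have iYYs : ∀ (i : Fin m) (a b : Fin n),
      Integrable (fun ω => ∑ j,
          ((Jh ω i a - J i a) * (Jh ω j b - J j b) * ((Qh' ω i - Q i) * (Qh' ω j - Q j))
          + (Jh ω i a - J i a) * (Qh ω j - Q j) * ((Qh' ω i - Q i) * (Jh' ω j b - J j b))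
          + (Qh ω i - Q i) * (Jh ω j b - J j b) * ((Jh' ω i a - J i a) * (Qh' ω j - Q j))
          + (Qh ω i - Q i) * (Qh ω j - Q j) * ((Jh' ω i a - J i a) * (Jh' ω j b - J j b)))) μ :=
    fun i a b => integrable_finset_sum _ fun j _ => iYY i a j b
  have hYab : ∀ a b : Fin n,
      (∫ ω, ((Jh ω - J)ᵀ.mulVec (Qh' ω - Q) + (Jh' ω - J)ᵀ.mulVec (Qh ω - Q)) a
          * ((Jh ω - J)ᵀ.mulVec (Qh' ω - Q) + (Jh' ω - J)ᵀ.mulVec (Qh ω - Q)) b ∂μ)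
        = ∑ i, ∑ j,
            (2 * ((∫ ω, (Jh ω i a - J i a) * (Jh ω j b - J j b) ∂μ)
                * (∫ ω, (Qh ω i - Q i) * (Qh ω j - Q j) ∂μ)
              + (∫ ω, (Jh ω i a - J i a) * (Qh ω j - Q j) ∂μ)
                * (∫ ω, (Qh ω i - Q i) * (Jh ω j b - J j b) ∂μ))) := by
    intro a b
    rw [integral_congr_ae (Filter.Eventually.of_forall (hYmul a b)),
      integral_finset_sum _ (fun i _ => iYYs i a b)]
    refine Finset.sum_congr rfl fun i _ => ?_
    rw [integral_finset_sum _ (fun j _ => iYY i a j b)]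
    refine Finset.sum_congr rfl fun j _ => ?_
    have hA : Integrable (fun ω =>
        (Jh ω i a - J i a) * (Jh ω j b - J j b) * ((Qh' ω i - Q i) * (Qh' ω j - Q j))
        + (Jh ω i a - J i a) * (Qh ω j - Q j) * ((Qh' ω i - Q i) * (Jh' ω j b - J j b))) μ :=
      (cp1 i a j b).1.add (cp2 i a j b).1
    have hB : Integrable (fun ω =>
        (Jh ω i a - J i a) * (Jh ω j b - J j b) * ((Qh' ω i - Q i) * (Qh' ω j - Q j))
        + (Jh ω i a - J i a) * (Qh ω j - Q j) * ((Qh' ω i - Q i) * (Jh' ω j b - J j b))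
        + (Qh ω i - Q i) * (Jh ω j b - J j b) * ((Jh' ω i a - J i a) * (Qh' ω j - Q j))) μ :=
      hA.add (cp3 i a j b).1
    rw [integral_add hB (cp4 i a j b).1, integral_add hA (cp3 i a j b).1,
      integral_add (cp1 i a j b).1 (cp2 i a j b).1,
      (cp1 i a j b).2, (cp2 i a j b).2, (cp3 i a j b).2, (cp4 i a j b).2]
    ring

  -- uncentered independent products for the LHS
  have up1 : ∀ (i : Fin m) (a : Fin n) (j : Fin m) (b : Fin n),
      Integrable (fun ω => Jh ω i a * Jh ω j b * (Qh' ω i * Qh' ω j)) μ ∧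
        (∫ ω, Jh ω i a * Jh ω j b * (Qh' ω i * Qh' ω j) ∂μ)
          = (∫ ω, Jh ω i a * Jh ω j b ∂μ) * (∫ ω, Qh ω i * Qh ω j ∂μ) :=
    fun i a j b => genIndep (fun p => p.2 i a * p.2 j b) (fun p => p.1 i * p.1 j)
      ((mj i a).mul (mj j b)) ((mq i).mul (mq j))
      (l2_mul_integrable (hJ2 i a) (hJ2 j b)) (l2_mul_integrable (hQ2' i) (hQ2' j))
  have up2 : ∀ (i : Fin m) (a : Fin n) (j : Fin m) (b : Fin n),
      Integrable (fun ω => Jh ω i a * Qh ω j * (Qh' ω i * Jh' ω j b)) μ ∧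
        (∫ ω, Jh ω i a * Qh ω j * (Qh' ω i * Jh' ω j b) ∂μ)
          = (∫ ω, Jh ω i a * Qh ω j ∂μ) * (∫ ω, Qh ω i * Jh ω j b ∂μ) :=
    fun i a j b => genIndep (fun p => p.2 i a * p.1 j) (fun p => p.1 i * p.2 j b)
      ((mj i a).mul (mq j)) ((mq i).mul (mj j b))
      (l2_mul_integrable (hJ2 i a) (hQ2 j)) (l2_mul_integrable (hQ2' i) (hJ2' j b))
  have u3 : ∀ (i j : Fin m) (a b : Fin n),
      Integrable (fun ω => J i a * J j b * (Qh ω i * Qh ω j)) μ :=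
    fun i j a b => (l2_mul_integrable (hQ2 i) (hQ2 j)).const_mul _
  have u4 : ∀ (i j : Fin m) (a b : Fin n),
      Integrable (fun ω => J i a * Q j * (Qh ω i * Jh ω j b)) μ :=
    fun i j a b => (l2_mul_integrable (hQ2 i) (hJ2 j b)).const_mul _
  have u5 : ∀ (i j : Fin m) (a b : Fin n),
      Integrable (fun ω => Q i * J j b * (Jh ω i a * Qh ω j)) μ :=
    fun i j a b => (l2_mul_integrable (hJ2 i a) (hQ2 j)).const_mul _
  have u6 : ∀ (i j : Fin m) (a b : Fin n),
      Integrable (fun ω => Q i * Q j * (Jh ω i a * Jh ω j b)) μ :=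
    fun i j a b => (l2_mul_integrable (hJ2 i a) (hJ2 j b)).const_mul _
  -- pointwise expansion of the LHS matrix entries
  have hpoint : ∀ (a b : Fin n) (ω : Ω),
      ((Jh ω)ᵀ * vecMulVec (Qh' ω) (Qh' ω) * Jh ω +
          (Jh ω)ᵀ * vecMulVec (Qh' ω) (Qh ω) * Jh' ω -
          Jᵀ * vecMulVec (Qh ω) (Qh ω) * J - Jᵀ * vecMulVec (Qh ω) Q * Jh ω -
          (Jh ω)ᵀ * vecMulVec Q (Qh ω) * J - (Jh ω)ᵀ * vecMulVec Q Q * Jh ω +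
          (2 : ℝ) • (Jᵀ * vecMulVec Q Q * J)) a b
        = ∑ i, ∑ j,
            (Jh ω i a * Jh ω j b * (Qh' ω i * Qh' ω j)
            + Jh ω i a * Qh ω j * (Qh' ω i * Jh' ω j b)
            - J i a * J j b * (Qh ω i * Qh ω j)
            - J i a * Q j * (Qh ω i * Jh ω j b)
            - Q i * J j b * (Jh ω i a * Qh ω j)
            - Q i * Q j * (Jh ω i a * Jh ω j b)
            + 2 * (J i a * Q i * (Q j * J j b))) := by
    intro a b ω
    simp only [Matrix.add_apply, Matrix.sub_apply, Matrix.smul_apply, smul_eq_mul, tri_apply,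
      Finset.mul_sum, ← Finset.sum_sub_distrib, ← Finset.sum_add_distrib]
    exact Finset.sum_congr rfl fun i _ => Finset.sum_congr rfl fun j _ => by ring
  -- per-(i,j) integrability of the combined LHS summand
  have iG : ∀ (i : Fin m) (a : Fin n) (j : Fin m) (b : Fin n),
      Integrable (fun ω =>
          Jh ω i a * Jh ω j b * (Qh' ω i * Qh' ω j)
          + Jh ω i a * Qh ω j * (Qh' ω i * Jh' ω j b)
          - J i a * J j b * (Qh ω i * Qh ω j)
          - J i a * Q j * (Qh ω i * Jh ω j b)
          - Q i * J j b * (Jh ω i a * Qh ω j)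
          - Q i * Q j * (Jh ω i a * Jh ω j b)
          + 2 * (J i a * Q i * (Q j * J j b))) μ :=
    fun i a j b => (((((((up1 i a j b).1.add (up2 i a j b).1).sub (u3 i j a b)).sub
      (u4 i j a b)).sub (u5 i j a b)).sub (u6 i j a b)).add (integrable_const _))
  have iGs : ∀ (i : Fin m) (a b : Fin n),
      Integrable (fun ω => ∑ j,
          (Jh ω i a * Jh ω j b * (Qh' ω i * Qh' ω j)
          + Jh ω i a * Qh ω j * (Qh' ω i * Jh' ω j b)
          - J i a * J j b * (Qh ω i * Qh ω j)
          - J i a * Q j * (Qh ω i * Jh ω j b)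
          - Q i * J j b * (Jh ω i a * Qh ω j)
          - Q i * Q j * (Jh ω i a * Jh ω j b)
          + 2 * (J i a * Q i * (Q j * J j b)))) μ :=
    fun i a b => integrable_finset_sum _ fun j _ => iG i a j b
  -- the LHS entry, fully evaluated
  have hL : ∀ a b : Fin n,
      (∫ ω, ((Jh ω)ᵀ * vecMulVec (Qh' ω) (Qh' ω) * Jh ω +
          (Jh ω)ᵀ * vecMulVec (Qh' ω) (Qh ω) * Jh' ω -
          Jᵀ * vecMulVec (Qh ω) (Qh ω) * J - Jᵀ * vecMulVec (Qh ω) Q * Jh ω -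
          (Jh ω)ᵀ * vecMulVec Q (Qh ω) * J - (Jh ω)ᵀ * vecMulVec Q Q * Jh ω +
          (2 : ℝ) • (Jᵀ * vecMulVec Q Q * J)) a b ∂μ)
        = ∑ i, ∑ j,
            ((∫ ω, (Jh ω i a - J i a) * (Jh ω j b - J j b) ∂μ)
              * (∫ ω, (Qh ω i - Q i) * (Qh ω j - Q j) ∂μ)
            + (∫ ω, (Jh ω i a - J i a) * (Qh ω j - Q j) ∂μ)
              * (∫ ω, (Qh ω i - Q i) * (Jh ω j b - J j b) ∂μ)) := by
    intro a b
    rw [integral_congr_ae (Filter.Eventually.of_forall (hpoint a b)),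
      integral_finset_sum _ (fun i _ => iGs i a b)]
    refine Finset.sum_congr rfl fun i _ => ?_
    rw [integral_finset_sum _ (fun j _ => iG i a j b)]
    refine Finset.sum_congr rfl fun j _ => ?_
    have hA : Integrable (fun ω =>
        Jh ω i a * Jh ω j b * (Qh' ω i * Qh' ω j)
        + Jh ω i a * Qh ω j * (Qh' ω i * Jh' ω j b)) μ := (up1 i a j b).1.add (up2 i a j b).1
    have hB : Integrable (fun ω =>
        Jh ω i a * Jh ω j b * (Qh' ω i * Qh' ω j)
        + Jh ω i a * Qh ω j * (Qh' ω i * Jh' ω j b)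
        - J i a * J j b * (Qh ω i * Qh ω j)) μ := hA.sub (u3 i j a b)
    have hC : Integrable (fun ω =>
        Jh ω i a * Jh ω j b * (Qh' ω i * Qh' ω j)
        + Jh ω i a * Qh ω j * (Qh' ω i * Jh' ω j b)
        - J i a * J j b * (Qh ω i * Qh ω j)
        - J i a * Q j * (Qh ω i * Jh ω j b)) μ := hB.sub (u4 i j a b)
    have hD : Integrable (fun ω =>
        Jh ω i a * Jh ω j b * (Qh' ω i * Qh' ω j)
        + Jh ω i a * Qh ω j * (Qh' ω i * Jh' ω j b)
        - J i a * J j b * (Qh ω i * Qh ω j)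
        - J i a * Q j * (Qh ω i * Jh ω j b)
        - Q i * J j b * (Jh ω i a * Qh ω j)) μ := hC.sub (u5 i j a b)
    have hE : Integrable (fun ω =>
        Jh ω i a * Jh ω j b * (Qh' ω i * Qh' ω j)
        + Jh ω i a * Qh ω j * (Qh' ω i * Jh' ω j b)
        - J i a * J j b * (Qh ω i * Qh ω j)
        - J i a * Q j * (Qh ω i * Jh ω j b)
        - Q i * J j b * (Jh ω i a * Qh ω j)
        - Q i * Q j * (Jh ω i a * Jh ω j b)) μ := hD.sub (u6 i j a b)
    rw [integral_add hE (integrable_const _), integral_sub hD (u6 i j a b),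
      integral_sub hC (u5 i j a b), integral_sub hB (u4 i j a b), integral_sub hA (u3 i j a b),
      integral_add (up1 i a j b).1 (up2 i a j b).1, (up1 i a j b).2, (up2 i a j b).2,
      integral_const_mul, integral_const_mul, integral_const_mul, integral_const_mul, integral_const,
      hCJJ i a j b, hCQQ i j, hCJQ i a j, hCQJ i j b]
    simp [measure_univ]
    ring

  -- integrability of Y a * Y b
  have iYYab : ∀ a b : Fin n,
      Integrable (fun ω =>
        ((Jh ω - J)ᵀ.mulVec (Qh' ω - Q) + (Jh' ω - J)ᵀ.mulVec (Qh ω - Q)) a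
        * ((Jh ω - J)ᵀ.mulVec (Qh' ω - Q) + (Jh' ω - J)ᵀ.mulVec (Qh ω - Q)) b) μ :=
    fun a b => (integrable_finset_sum _ fun i (_ : i ∈ Finset.univ) => iYYs i a b).congr
      (Filter.Eventually.of_forall fun ω => (hYmul a b ω).symm)
  have hsym : ∀ a b : Fin n,
      (∫ ω, ((Jh ω - J)ᵀ.mulVec (Qh' ω - Q) + (Jh' ω - J)ᵀ.mulVec (Qh ω - Q)) a
          * ((Jh ω - J)ᵀ.mulVec (Qh' ω - Q) + (Jh' ω - J)ᵀ.mulVec (Qh ω - Q)) b ∂μ)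
        = ∫ ω, ((Jh ω - J)ᵀ.mulVec (Qh' ω - Q) + (Jh' ω - J)ᵀ.mulVec (Qh ω - Q)) b
          * ((Jh ω - J)ᵀ.mulVec (Qh' ω - Q) + (Jh' ω - J)ᵀ.mulVec (Qh ω - Q)) a ∂μ :=
    fun a b => integral_congr_ae (Filter.Eventually.of_forall fun ω => mul_comm _ _)
  -- the main identity
  have hmain : matMean μ (fun ω =>
        (Jh ω)ᵀ * vecMulVec (Qh' ω) (Qh' ω) * Jh ω +
          (Jh ω)ᵀ * vecMulVec (Qh' ω) (Qh ω) * Jh' ω -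
          Jᵀ * vecMulVec (Qh ω) (Qh ω) * J - Jᵀ * vecMulVec (Qh ω) Q * Jh ω -
          (Jh ω)ᵀ * vecMulVec Q (Qh ω) * J - (Jh ω)ᵀ * vecMulVec Q Q * Jh ω +
          (2 : ℝ) • (Jᵀ * vecMulVec Q Q * J)) =
      (1 / 2 : ℝ) • vecVar μ (fun ω =>
        (Jh ω - J)ᵀ.mulVec (Qh' ω - Q) + (Jh' ω - J)ᵀ.mulVec (Qh ω - Q)) := by
    ext a b
    simp only [matMean, vecVar, Matrix.of_apply, Matrix.smul_apply, smul_eq_mul]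
    rw [hL a b, hYab a b, hYa0 a, hYa0 b, mul_zero, sub_zero, Finset.mul_sum]
    refine Finset.sum_congr rfl fun i _ => ?_
    rw [Finset.mul_sum]
    exact Finset.sum_congr rfl fun j _ => by ring
  refine ⟨hmain, ?_⟩
  rw [hmain]
  refine Matrix.PosSemidef.of_dotProduct_mulVec_nonneg ?_ ?_
  · -- Hermitian
    ext a b
    simp only [Matrix.conjTranspose_apply, Matrix.smul_apply, vecVar, Matrix.of_apply,
      smul_eq_mul, star_trivial]
    rw [hsym b a, hYa0 a, hYa0 b]
  · -- nonnegativity of the quadratic form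
    intro x
    have iXY : ∀ a b : Fin n, Integrable (fun ω => x a * x b *
        (((Jh ω - J)ᵀ.mulVec (Qh' ω - Q) + (Jh' ω - J)ᵀ.mulVec (Qh ω - Q)) a
        * ((Jh ω - J)ᵀ.mulVec (Qh' ω - Q) + (Jh' ω - J)ᵀ.mulVec (Qh ω - Q)) b)) μ :=
      fun a b => (iYYab a b).const_mul _
    have iXYs : ∀ a : Fin n, Integrable (fun ω => ∑ b, x a * x b *
        (((Jh ω - J)ᵀ.mulVec (Qh' ω - Q) + (Jh' ω - J)ᵀ.mulVec (Qh ω - Q)) a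
        * ((Jh ω - J)ᵀ.mulVec (Qh' ω - Q) + (Jh' ω - J)ᵀ.mulVec (Qh ω - Q)) b)) μ :=
      fun a => integrable_finset_sum _ fun b _ => iXY a b
    have hptsq : ∀ ω : Ω,
        (∑ a, x a * ((Jh ω - J)ᵀ.mulVec (Qh' ω - Q) + (Jh' ω - J)ᵀ.mulVec (Qh ω - Q)) a)^2
          = ∑ a, ∑ b, x a * x b *
            (((Jh ω - J)ᵀ.mulVec (Qh' ω - Q) + (Jh' ω - J)ᵀ.mulVec (Qh ω - Q)) a
            * ((Jh ω - J)ᵀ.mulVec (Qh' ω - Q) + (Jh' ω - J)ᵀ.mulVec (Qh ω - Q)) b) := by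
      intro ω
      rw [sq, Finset.sum_mul_sum]
      exact Finset.sum_congr rfl fun a _ => Finset.sum_congr rfl fun b _ => by ring
    have hsq : (∫ ω, (∑ a, x a *
          ((Jh ω - J)ᵀ.mulVec (Qh' ω - Q) + (Jh' ω - J)ᵀ.mulVec (Qh ω - Q)) a)^2 ∂μ)
        = ∑ a, ∑ b, x a * x b *
          (∫ ω, ((Jh ω - J)ᵀ.mulVec (Qh' ω - Q) + (Jh' ω - J)ᵀ.mulVec (Qh ω - Q)) a
          * ((Jh ω - J)ᵀ.mulVec (Qh' ω - Q) + (Jh' ω - J)ᵀ.mulVec (Qh ω - Q)) b ∂μ) := by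
      rw [integral_congr_ae (Filter.Eventually.of_forall hptsq),
        integral_finset_sum _ (fun a _ => iXYs a)]
      refine Finset.sum_congr rfl fun a _ => ?_
      rw [integral_finset_sum _ (fun b _ => iXY a b)]
      exact Finset.sum_congr rfl fun b _ => integral_const_mul _ _
    have h0 : (0:ℝ) ≤ 1/2 * ∫ ω, (∑ a, x a *
        ((Jh ω - J)ᵀ.mulVec (Qh' ω - Q) + (Jh' ω - J)ᵀ.mulVec (Qh ω - Q)) a)^2 ∂μ :=
      mul_nonneg (by norm_num) (integral_nonneg fun ω => sq_nonneg _)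
    refine le_of_le_of_eq h0 ?_
    rw [hsq, Finset.mul_sum]
    simp only [dotProduct, Matrix.mulVec, Matrix.smul_apply, vecVar, Matrix.of_apply,
      smul_eq_mul, Pi.star_apply, star_trivial, hYa0, mul_zero, sub_zero]
    refine Finset.sum_congr rfl fun a _ => ?_
    rw [Finset.mul_sum, Finset.mul_sum]
    exact Finset.sum_congr rfl fun b _ => by ring
end
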